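/- arXiv:2504.17596 — 12 statements merged into one kernel-verified Lean document; each statement's English description precedes it below -/
import Mathlib

section
/- For all x ∈ R^N, 0 ≤ R(x) ≤ c^T α and R(x) ≤ D(x). -/
open Matrix

noncomputable def Dmap {N : ℕ} (Q : Matrix (Fin N) (Fin N) ℝ) (c α : Fin N → ℝ)
    (x : Fin N → ℝ) : ℝ :=
  x ⬝ᵥ Q.mulVec x - 2 * (c ⬝ᵥ x) + c ⬝ᵥ α

noncomputable def Rmap {N : ℕ} (Q : Matrix (Fin N) (Fin N) ℝ) (c α : Fin N → ℝ)
    (x : Fin N → ℝ) : ℝ :=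
  if 0 < c ⬝ᵥ x then c ⬝ᵥ α - (c ⬝ᵥ x) ^ 2 / (x ⬝ᵥ Q.mulVec x) else c ⬝ᵥ α

theorem stmt4 {N : ℕ} (Q : Matrix (Fin N) (Fin N) ℝ) (hQ : Q.PosSemidef)
    (α : Fin N → ℝ) (c : Fin N → ℝ) (hc : c = Q.mulVec α) (hc0 : c ≠ 0)
    (x : Fin N → ℝ) :
    0 ≤ Rmap Q c α x ∧ Rmap Q c α x ≤ c ⬝ᵥ α ∧ Rmap Q c α x ≤ Dmap Q c α x := by
  have hT : Qᵀ = Q := by simpa using (congrArg Matrix.transpose hQ.1.eq).symm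
  have qnn : ∀ v : Fin N → ℝ, 0 ≤ v ⬝ᵥ Q.mulVec v := fun v => by simpa using hQ.dotProduct_mulVec_nonneg v
  have hsym : ∀ u v : Fin N → ℝ, u ⬝ᵥ Q.mulVec v = v ⬝ᵥ Q.mulVec u := fun u v => by
    rw [dotProduct_mulVec, ← mulVec_transpose, hT, dotProduct_comm]
  have hcx : ∀ y : Fin N → ℝ, c ⬝ᵥ y = α ⬝ᵥ Q.mulVec y := fun y => by
    rw [hc, dotProduct_comm, hsym]
  have hcα : c ⬝ᵥ α = α ⬝ᵥ Q.mulVec α := hcx α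
  have hcαnn : 0 ≤ c ⬝ᵥ α := hcα ▸ qnn α
  have key : ∀ t : ℝ, 0 ≤ (x ⬝ᵥ Q.mulVec x) * (t * t)
      + (2 * (α ⬝ᵥ Q.mulVec x)) * t + (α ⬝ᵥ Q.mulVec α) := by
    intro t
    have h := qnn (t • x + α)
    have hexp : (t • x + α) ⬝ᵥ Q.mulVec (t • x + α)
        = (x ⬝ᵥ Q.mulVec x) * (t * t) + (2 * (α ⬝ᵥ Q.mulVec x)) * t
          + (α ⬝ᵥ Q.mulVec α) := by
      simp only [mulVec_add, mulVec_smul, add_dotProduct, smul_dotProduct,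
        dotProduct_add, dotProduct_smul, smul_eq_mul, hsym α x]
      ring
    linarith [hexp ▸ h]
  have CS : (c ⬝ᵥ x) ^ 2 ≤ (x ⬝ᵥ Q.mulVec x) * (c ⬝ᵥ α) := by
    have h := discrim_le_zero key
    rw [discrim] at h
    rw [hcx x, hcα]
    nlinarith [h]
  set s := c ⬝ᵥ x with hs
  set t := x ⬝ᵥ Q.mulVec x with ht
  have htnn : 0 ≤ t := qnn x
  by_cases hpos : 0 < s
  · have htpos : 0 < t := by
      rcases lt_or_eq_of_le htnn with h | h
      · exact h
      · exfalso
        have h0 : Q.mulVec x = 0 := by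
          have := (hQ.dotProduct_mulVec_zero_iff x).mp (by simpa using h.symm)
          simpa using this
        have : s = 0 := by rw [hs, hcx, h0, dotProduct_zero]
        exact hpos.ne' this
    have hR : Rmap Q c α x = c ⬝ᵥ α - s ^ 2 / t := by unfold Rmap; exact if_pos hpos
    have hsq : 0 ≤ s ^ 2 / t := div_nonneg (sq_nonneg s) htnn
    refine ⟨?_, ?_, ?_⟩
    · rw [hR]
      have : s ^ 2 / t ≤ c ⬝ᵥ α := (div_le_iff₀ htpos).mpr (by nlinarith [CS])
      linarith
    · rw [hR]; linarith
    · rw [hR, Dmap]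
      rw [← hs, ← ht]
      have h1 : 0 ≤ (t - s) ^ 2 / t := div_nonneg (sq_nonneg _) htnn
      have h2 : (t - s) ^ 2 / t = t - 2 * s + s ^ 2 / t := by
        field_simp
        ring
      linarith [h2 ▸ h1]
  · have hR : Rmap Q c α x = c ⬝ᵥ α := by unfold Rmap; exact if_neg hpos
    refine ⟨hR ▸ hcαnn, le_of_eq hR, ?_⟩
    rw [hR, Dmap, ← hs, ← ht]
    push_neg at hpos
    linarith
end

section
/- The map R is quasiconvex on R^N: for all x, u ∈ R^N and t ∈ [0,1], R((1-t)x + t u) ≤ max{R(x), R(u)}. -/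
open Matrix

set_option maxHeartbeats 1600000 in
theorem stmt5 {N : ℕ} (Q : Matrix (Fin N) (Fin N) ℝ) (hQ : Q.PosSemidef)
    (α : Fin N → ℝ) (c : Fin N → ℝ) (hc : c = Q.mulVec α) (hc0 : c ≠ 0)
    (x u : Fin N → ℝ) (t : ℝ) (ht : t ∈ Set.Icc (0 : ℝ) 1) :
    Rmap Q c α ((1 - t) • x + t • u) ≤ max (Rmap Q c α x) (Rmap Q c α u) := by
  obtain ⟨ht0, ht1⟩ := ht
  -- symmetry of the form
  have hQs : Qᵀ = Q := by
    ext i j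
    simpa using congrFun (congrFun hQ.1 i) j
  have hvm : ∀ v : Fin N → ℝ, v ᵥ* Q = Q *ᵥ v := by
    intro v
    nth_rewrite 1 [← hQs]
    exact vecMul_transpose Q v
  have hsym : ∀ v w : Fin N → ℝ, v ⬝ᵥ Q *ᵥ w = w ⬝ᵥ Q *ᵥ v := by
    intro v w
    rw [dotProduct_mulVec, hvm, dotProduct_comm]
  -- nonnegativity of the form
  have hnn : ∀ v : Fin N → ℝ, 0 ≤ v ⬝ᵥ Q *ᵥ v := by
    intro v; simpa using hQ.dotProduct_mulVec_nonneg v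
  -- kernel fact
  have hker : ∀ v : Fin N → ℝ, v ⬝ᵥ Q *ᵥ v = 0 → c ⬝ᵥ v = 0 := by
    intro v hv
    have h0 : Q *ᵥ v = 0 := (hQ.dotProduct_mulVec_zero_iff v).mp (by simpa using hv)
    rw [hc, dotProduct_comm, hsym v α, h0, dotProduct_zero]
  -- Cauchy-Schwarz
  have hCS : (x ⬝ᵥ Q *ᵥ u) ^ 2 ≤ (x ⬝ᵥ Q *ᵥ x) * (u ⬝ᵥ Q *ᵥ u) := by
    have h := discrim_le_zero (a := u ⬝ᵥ Q *ᵥ u) (b := 2 * (x ⬝ᵥ Q *ᵥ u)) (c := x ⬝ᵥ Q *ᵥ x) ?_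
    · rw [discrim] at h; nlinarith [h]
    · intro r
      have h2 := hnn (x + r • u)
      have : (x + r • u) ⬝ᵥ Q *ᵥ (x + r • u)
          = (u ⬝ᵥ Q *ᵥ u) * (r * r) + 2 * (x ⬝ᵥ Q *ᵥ u) * r + x ⬝ᵥ Q *ᵥ x := by
        simp only [mulVec_add, mulVec_smul, dotProduct_add, add_dotProduct,
          smul_dotProduct, dotProduct_smul, smul_eq_mul]
        rw [hsym u x]; ring
      linarith [this ▸ h2]
  set z := (1 - t) • x + t • u with hzdef
  have hexp : z ⬝ᵥ Q *ᵥ z = (1 - t) ^ 2 * (x ⬝ᵥ Q *ᵥ x)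
      + 2 * (1 - t) * t * (x ⬝ᵥ Q *ᵥ u) + t ^ 2 * (u ⬝ᵥ Q *ᵥ u) := by
    simp only [hzdef, mulVec_add, mulVec_smul, dotProduct_add, add_dotProduct,
      smul_dotProduct, dotProduct_smul, smul_eq_mul]
    rw [hsym u x]; ring
  have hcz : c ⬝ᵥ z = (1 - t) * (c ⬝ᵥ x) + t * (c ⬝ᵥ u) := by
    simp only [hzdef, dotProduct_add, dotProduct_smul, smul_eq_mul]
  set a := c ⬝ᵥ x
  set b := c ⬝ᵥ u
  set qx := x ⬝ᵥ Q *ᵥ x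
  set qu := u ⬝ᵥ Q *ᵥ u
  set qz := z ⬝ᵥ Q *ᵥ z
  set w := x ⬝ᵥ Q *ᵥ u
  unfold Rmap
  by_cases hz : 0 < c ⬝ᵥ z
  · rw [if_pos hz]
    -- qz > 0
    have hqz : 0 < qz := by
      rcases (hnn z).lt_or_eq with h | h
      · exact h
      · exact absurd (hker z h.symm) (by positivity)
    by_cases ha : 0 < a
    · by_cases hb : 0 < b
      · -- main case
        have hqx : 0 < qx := by
          rcases (hnn x).lt_or_eq with h | h
          · exact h
          · exact absurd (hker x h.symm) (by simp only [a] at ha; linarith)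
        have hqu : 0 < qu := by
          rcases (hnn u).lt_or_eq with h | h
          · exact h
          · exact absurd (hker u h.symm) (by linarith)
        rw [if_pos ha, if_pos hb]
        set m := min (a ^ 2 / qx) (b ^ 2 / qu) with hm
        have hm0 : 0 < m := lt_min (by positivity) (by positivity)
        have hma : m * qx ≤ a ^ 2 := by
          have := min_le_left (a ^ 2 / qx) (b ^ 2 / qu)
          calc m * qx ≤ a ^ 2 / qx * qx := by nlinarith
            _ = a ^ 2 := by field_simp
        have hmb : m * qu ≤ b ^ 2 := by
          have := min_le_right (a ^ 2 / qx) (b ^ 2 / qu)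
          calc m * qu ≤ b ^ 2 / qu * qu := by nlinarith
            _ = b ^ 2 := by field_simp
        have hcross : m * w ≤ a * b := by
          have hmqu : (0:ℝ) ≤ m * qu := le_of_lt (mul_pos hm0 hqu)
          have e1 : (m * qx) * (m * qu) ≤ a ^ 2 * b ^ 2 :=
            mul_le_mul hma hmb hmqu (sq_nonneg a)
          have e2 : m ^ 2 * w ^ 2 ≤ m ^ 2 * (qx * qu) :=
            mul_le_mul_of_nonneg_left hCS (sq_nonneg m)
          have h1 : (m * w) ^ 2 ≤ (a * b) ^ 2 := by nlinarith [e1, e2]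
          nlinarith [h1, mul_pos ha hb, sq_nonneg (m * w - a * b)]
        have hkey : m * qz ≤ (c ⬝ᵥ z) ^ 2 := by
          rw [hexp, hcz]
          nlinarith [mul_nonneg (mul_nonneg ht0 (by linarith : (0:ℝ) ≤ 1 - t)) (sub_nonneg.mpr hcross),
            mul_nonneg (sq_nonneg (1 - t)) (sub_nonneg.mpr hma),
            mul_nonneg (sq_nonneg t) (sub_nonneg.mpr hmb)]
        have hfinal : m ≤ (c ⬝ᵥ z) ^ 2 / qz := (le_div_iff₀ hqz).mpr hkey
        rcases min_cases (a ^ 2 / qx) (b ^ 2 / qu) with ⟨he, _⟩ | ⟨he, _⟩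
        · exact le_max_of_le_left (by rw [← he] at *; linarith)
        · exact le_max_of_le_right (by rw [← he] at *; linarith)
      · -- b ≤ 0 : R(u) = c⬝α, and R(z) ≤ c⬝α
        rw [if_neg hb]
        refine le_max_of_le_right ?_
        have : 0 ≤ (c ⬝ᵥ z) ^ 2 / qz := by positivity
        linarith
    · rw [if_neg ha]
      refine le_max_of_le_left ?_
      have : 0 ≤ (c ⬝ᵥ z) ^ 2 / qz := by positivity
      linarith
  · rw [if_neg hz]
    -- c⬝z ≤ 0, so one of a, b ≤ 0
    by_cases ha : 0 < a
    · by_cases hb : 0 < b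
      · exfalso
        apply hz
        rw [hcz]
        rcases le_total a b with h | h
        · nlinarith [mul_nonneg ht0 (sub_nonneg.2 h)]
        · nlinarith [mul_nonneg (by linarith : (0:ℝ) ≤ 1 - t) (sub_nonneg.2 h)]
      · rw [if_neg hb]; exact le_max_right _ _
    · rw [if_neg ha]; exact le_max_left _ _
end

section
/- R is pseudoconvex on the cone C = {x : c^T x > 0} in the following sense: if x, u ∈ C and u^T (s_x Q x - c) ≥ 0, where s_x = (c^T x)/(x^T Q x), then R(x) ≤ R(u). -/
open Matrix

lemma qform_nonneg {N : ℕ} {Q : Matrix (Fin N) (Fin N) ℝ} (hQ : Q.PosSemidef)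
    (v : Fin N → ℝ) : 0 ≤ v ⬝ᵥ Q.mulVec v := by
  simpa using hQ.dotProduct_mulVec_nonneg v

lemma qform_symm {N : ℕ} {Q : Matrix (Fin N) (Fin N) ℝ} (hQ : Q.PosSemidef)
    (v w : Fin N → ℝ) : v ⬝ᵥ Q.mulVec w = w ⬝ᵥ Q.mulVec v := by
  have h : Qᵀ = Q := hQ.1
  calc v ⬝ᵥ Q.mulVec w = v ᵥ* Q ⬝ᵥ w := dotProduct_mulVec v Q w
    _ = w ⬝ᵥ v ᵥ* Q := dotProduct_comm _ _
    _ = w ⬝ᵥ Qᵀ *ᵥ v := by rw [← vecMul_transpose, Matrix.transpose_transpose]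
    _ = w ⬝ᵥ Q *ᵥ v := by rw [h]

lemma cauchy_schwarz_psd {N : ℕ} {Q : Matrix (Fin N) (Fin N) ℝ} (hQ : Q.PosSemidef)
    (v w : Fin N → ℝ) :
    (v ⬝ᵥ Q.mulVec w) ^ 2 ≤ (v ⬝ᵥ Q.mulVec v) * (w ⬝ᵥ Q.mulVec w) := by
  have key : ∀ t : ℝ, 0 ≤ (w ⬝ᵥ Q.mulVec w) * (t * t)
      + (2 * (v ⬝ᵥ Q.mulVec w)) * t + (v ⬝ᵥ Q.mulVec v) := by
    intro t
    have h := qform_nonneg hQ (v + t • w)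
    have hsym := qform_symm hQ v w
    simp only [mulVec_add, mulVec_smul, dotProduct_add, add_dotProduct,
      dotProduct_smul, smul_dotProduct, smul_eq_mul] at h
    rw [hsym] at h
    rw [hsym]
    nlinarith [h]
  have := discrim_le_zero key
  rw [discrim] at this
  nlinarith [this]

theorem stmt6 {N : ℕ} (Q : Matrix (Fin N) (Fin N) ℝ) (hQ : Q.PosSemidef)
    (α : Fin N → ℝ) (c : Fin N → ℝ) (hc : c = Q.mulVec α) (hc0 : c ≠ 0)
    (x u : Fin N → ℝ) (hx : 0 < c ⬝ᵥ x) (hu : 0 < c ⬝ᵥ u)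
    (hgrad : 0 ≤ u ⬝ᵥ (((c ⬝ᵥ x) / (x ⬝ᵥ Q.mulVec x)) • Q.mulVec x - c)) :
    Rmap Q c α x ≤ Rmap Q c α u := by
  have hqx : 0 < x ⬝ᵥ Q.mulVec x := by
    rcases lt_or_eq_of_le (qform_nonneg hQ x) with h | h
    · exact h
    · exfalso
      have h0 : Q.mulVec x = 0 := (hQ.dotProduct_mulVec_zero_iff x).mp (by simpa using h.symm)
      have : c ⬝ᵥ x = 0 := by
        rw [hc, dotProduct_comm, qform_symm hQ x α, h0]
        simp
      linarith
  have hqu : 0 < u ⬝ᵥ Q.mulVec u := by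
    rcases lt_or_eq_of_le (qform_nonneg hQ u) with h | h
    · exact h
    · exfalso
      have h0 : Q.mulVec u = 0 := (hQ.dotProduct_mulVec_zero_iff u).mp (by simpa using h.symm)
      have : c ⬝ᵥ u = 0 := by
        rw [hc, dotProduct_comm, qform_symm hQ u α, h0]
        simp
      linarith
  -- hgrad rewritten
  have hgrad' : c ⬝ᵥ u * (x ⬝ᵥ Q.mulVec x) ≤ (c ⬝ᵥ x) * (u ⬝ᵥ Q.mulVec x) := by
    have h1 : u ⬝ᵥ (((c ⬝ᵥ x) / (x ⬝ᵥ Q.mulVec x)) • Q.mulVec x - c)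
        = ((c ⬝ᵥ x) / (x ⬝ᵥ Q.mulVec x)) * (u ⬝ᵥ Q.mulVec x) - u ⬝ᵥ c := by
      simp [dotProduct_sub, dotProduct_smul, smul_eq_mul]
    rw [h1] at hgrad
    have h2 : u ⬝ᵥ c ≤ (c ⬝ᵥ x) / (x ⬝ᵥ Q.mulVec x) * (u ⬝ᵥ Q.mulVec x) := by linarith
    rw [div_mul_eq_mul_div, le_div_iff₀ hqx] at h2
    rw [dotProduct_comm c u]
    linarith
  have hcs := cauchy_schwarz_psd hQ u x
  have hux : 0 < u ⬝ᵥ Q.mulVec x := by nlinarith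
  have key : (c ⬝ᵥ u) ^ 2 / (u ⬝ᵥ Q.mulVec u) ≤ (c ⬝ᵥ x) ^ 2 / (x ⬝ᵥ Q.mulVec x) := by
    rw [div_le_div_iff₀ hqu hqx]
    nlinarith [mul_self_le_mul_self (by positivity : (0:ℝ) ≤ c ⬝ᵥ u * (x ⬝ᵥ Q.mulVec x)) hgrad',
      mul_le_mul_of_nonneg_left hcs (sq_nonneg (c ⬝ᵥ x)), hqx, mul_pos hqx hqx, hx, hu]
  simp only [Rmap, if_pos hx, if_pos hu]
  linarith
end

section
/- Let x ∈ C and v ∈ R^N with Λ(x; v) := 2 s_x v^T (s_x Q x - c) = 0, where s_x = (c^T x)/(x^T Q x). Then R(x) = min over z ∈ span{x, v} of R(z). -/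
open Matrix

theorem stmt8 {N : ℕ} (Q : Matrix (Fin N) (Fin N) ℝ) (hQ : Q.PosSemidef)
    (α : Fin N → ℝ) (c : Fin N → ℝ) (hc : c = Q.mulVec α) (hc0 : c ≠ 0)
    (x v : Fin N → ℝ) (hx : 0 < c ⬝ᵥ x)
    (hΛ : 2 * ((c ⬝ᵥ x) / (x ⬝ᵥ Q.mulVec x)) *
      (v ⬝ᵥ (((c ⬝ᵥ x) / (x ⬝ᵥ Q.mulVec x)) • Q.mulVec x - c)) = 0) :
    IsLeast {r : ℝ | ∃ z ∈ (Submodule.span ℝ ({x, v} : Set (Fin N → ℝ)) :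
        Set (Fin N → ℝ)), Rmap Q c α z = r} (Rmap Q c α x) := by
  have hsym : ∀ y z : Fin N → ℝ, y ⬝ᵥ Q.mulVec z = z ⬝ᵥ Q.mulVec y := by
    intro y z
    rw [dotProduct_mulVec, ← mulVec_transpose]
    have ht : Qᵀ = Q := by
      have := hQ.1
      rwa [Matrix.IsHermitian, conjTranspose_eq_transpose_of_trivial] at this
    rw [ht, dotProduct_comm]
  have hnn : ∀ y : Fin N → ℝ, 0 ≤ y ⬝ᵥ Q.mulVec y := fun y => by
    simpa using hQ.dotProduct_mulVec_nonneg y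
  have hca : ∀ y : Fin N → ℝ, c ⬝ᵥ y = α ⬝ᵥ Q.mulVec y := by
    intro y
    rw [dotProduct_comm, hc, hsym y α]
  have hpos : ∀ y : Fin N → ℝ, 0 < c ⬝ᵥ y → 0 < y ⬝ᵥ Q.mulVec y := by
    intro y hy
    rcases (hnn y).lt_or_eq with h | h
    · exact h
    · exfalso
      have h0 : Q.mulVec y = 0 := (hQ.dotProduct_mulVec_zero_iff y).mp (by simpa using h.symm)
      rw [hca y, h0, dotProduct_zero] at hy
      exact lt_irrefl 0 hy
  have hxQ : 0 < x ⬝ᵥ Q.mulVec x := hpos x hx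
  set s : ℝ := (c ⬝ᵥ x) / (x ⬝ᵥ Q.mulVec x) with hs_def
  have hs : 0 < s := div_pos hx hxQ
  have hv : v ⬝ᵥ (s • Q.mulVec x - c) = 0 := by
    rcases mul_eq_zero.mp hΛ with h | h
    · exact absurd h (by positivity)
    · exact h
  have hvQ : s * (v ⬝ᵥ Q.mulVec x) = c ⬝ᵥ v := by
    have : v ⬝ᵥ (s • Q.mulVec x) - v ⬝ᵥ c = 0 := by
      rw [← dotProduct_sub]; exact hv
    simp only [dotProduct_smul, smul_eq_mul] at this
    rw [dotProduct_comm v c] at this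
    linarith
  have hCS : ∀ z : Fin N → ℝ, (z ⬝ᵥ Q.mulVec x) ^ 2 ≤ (z ⬝ᵥ Q.mulVec z) * (x ⬝ᵥ Q.mulVec x) := by
    intro z
    have h := hnn (z - ((z ⬝ᵥ Q.mulVec x) / (x ⬝ᵥ Q.mulVec x)) • x)
    simp only [mulVec_sub, mulVec_smul, sub_dotProduct, dotProduct_sub, dotProduct_smul,
      smul_dotProduct, smul_eq_mul] at h
    rw [hsym x z] at h
    have hne : x ⬝ᵥ Q.mulVec x ≠ 0 := ne_of_gt hxQ
    field_simp at h
    nlinarith [h]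
  constructor
  · exact ⟨x, Submodule.subset_span (by simp), rfl⟩
  · rintro r ⟨z, hz, rfl⟩
    have hRx : Rmap Q c α x = c ⬝ᵥ α - (c ⬝ᵥ x) ^ 2 / (x ⬝ᵥ Q.mulVec x) := if_pos hx
    by_cases hzc : 0 < c ⬝ᵥ z
    · have hzQ : 0 < z ⬝ᵥ Q.mulVec z := hpos z hzc
      obtain ⟨a, b, rfl⟩ := Submodule.mem_span_pair.mp hz
      set z := a • x + b • v with hz_def
      have hcz : c ⬝ᵥ z = s * (z ⬝ᵥ Q.mulVec x) := by
        have hax : c ⬝ᵥ x = s * (x ⬝ᵥ Q.mulVec x) := by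
          rw [hs_def]; field_simp
        simp only [hz_def, dotProduct_add, dotProduct_smul, smul_dotProduct, smul_eq_mul,
          add_dotProduct]
        rw [hax, ← hvQ]
        ring
      have key : (c ⬝ᵥ z) ^ 2 / (z ⬝ᵥ Q.mulVec z) ≤ (c ⬝ᵥ x) ^ 2 / (x ⬝ᵥ Q.mulVec x) := by
        rw [div_le_div_iff₀ hzQ hxQ, hcz]
        have h1 := hCS z
        have hcx2 : (c ⬝ᵥ x) ^ 2 = s ^ 2 * (x ⬝ᵥ Q.mulVec x) ^ 2 := by
          rw [hs_def]; field_simp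
        rw [hcx2]
        nlinarith [h1, sq_nonneg s, hxQ, hzQ, mul_pos hzQ hxQ]
      simp only [Rmap]
      rw [if_pos hx, if_pos hzc]
      linarith
    · simp only [Rmap]
      rw [if_pos hx, if_neg hzc]
      have : 0 ≤ (c ⬝ᵥ x) ^ 2 / (x ⬝ᵥ Q.mulVec x) := by positivity
      linarith
end

section
/- Let x, v ∈ R^N be such that Qx and Qv are not collinear and (c^T x, c^T v) ≠ (0,0). Set z = Υ(v;x) x + Υ(x;v) v, where Υ(a;b) = (c^T b)(a^T Q a) - (c^T a)(b^T Q a). Then c^T z > 0 and the set of minimisers of R over span{x,v} is exactly the open ray {s z : s > 0}. -/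
open Matrix

/-- `Υ(a;b) = (cᵀb)(aᵀQa) - (cᵀa)(bᵀQa)`. -/
noncomputable def Ups {N : ℕ} (Q : Matrix (Fin N) (Fin N) ℝ) (c : Fin N → ℝ)
    (a b : Fin N → ℝ) : ℝ :=
  (c ⬝ᵥ b) * (a ⬝ᵥ Q.mulVec a) - (c ⬝ᵥ a) * (b ⬝ᵥ Q.mulVec a)

lemma key_id (A B D p q a b : ℝ) :
    (B*p^2 - 2*D*p*q + A*q^2) * (a^2*A + 2*a*b*D + b^2*B)
      - (A*B - D^2)*(a*p+b*q)^2
    = (a*(q*A - p*D) - b*(p*B - q*D))^2 := by ring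

lemma posV (A B D p q : ℝ) (hB : 0 < B) (hΔ : 0 < A*B - D^2)
    (hpq : ¬(p = 0 ∧ q = 0)) : 0 < B*p^2 - 2*D*p*q + A*q^2 := by
  have h : 0 < B * (B*p^2 - 2*D*p*q + A*q^2) := by
    have hBD : B * (B*p^2 - 2*D*p*q + A*q^2) = (B*p - D*q)^2 + (A*B - D^2)*q^2 := by ring
    rcases eq_or_ne q 0 with hq | hq
    · have hp : p ≠ 0 := by tauto
      have hp2 : 0 < p^2 := sq_pos_of_ne_zero hp
      subst hq
      nlinarith [mul_pos (mul_pos hB hB) hp2]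
    · have h1 : 0 < (A*B - D^2)*q^2 := by positivity
      nlinarith [sq_nonneg (B*p - D*q)]
  by_contra hle
  push_neg at hle
  nlinarith

theorem stmt9 {N : ℕ} (Q : Matrix (Fin N) (Fin N) ℝ) (hQ : Q.PosSemidef)
    (α : Fin N → ℝ) (c : Fin N → ℝ) (hc : c = Q.mulVec α) (hc0 : c ≠ 0)
    (x v : Fin N → ℝ)
    (hnc : LinearIndependent ℝ ![Q.mulVec x, Q.mulVec v])
    (hcxv : (c ⬝ᵥ x, c ⬝ᵥ v) ≠ (0, 0)) :
    0 < c ⬝ᵥ (Ups Q c v x • x + Ups Q c x v • v) ∧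
    {w : Fin N → ℝ | w ∈ (Submodule.span ℝ ({x, v} : Set (Fin N → ℝ)) :
        Set (Fin N → ℝ)) ∧
      ∀ z ∈ (Submodule.span ℝ ({x, v} : Set (Fin N → ℝ)) : Set (Fin N → ℝ)),
        Rmap Q c α w ≤ Rmap Q c α z}
      = {w : Fin N → ℝ | ∃ s : ℝ, 0 < s ∧
          w = s • (Ups Q c v x • x + Ups Q c x v • v)} := by
  classical
  have hQt : Qᵀ = Q := by
    have h := hQ.1
    simpa [Matrix.IsHermitian] using h
  have hsym : ∀ a b : Fin N → ℝ, a ⬝ᵥ Q.mulVec b = b ⬝ᵥ Q.mulVec a := by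
    intro a b
    rw [Matrix.dotProduct_mulVec, ← Matrix.mulVec_transpose, hQt, dotProduct_comm]
  have hnn : ∀ w : Fin N → ℝ, 0 ≤ w ⬝ᵥ Q.mulVec w := fun w => by
    simpa using hQ.dotProduct_mulVec_nonneg w
  have hz : ∀ w : Fin N → ℝ, w ⬝ᵥ Q.mulVec w = 0 → Q.mulVec w = 0 := fun w hw => by
    apply (hQ.dotProduct_mulVec_zero_iff w).mp
    simpa using hw
  have hpair : ∀ s t : ℝ, s • Q.mulVec x + t • Q.mulVec v = 0 → s = 0 ∧ t = 0 :=
    LinearIndependent.pair_iff.mp hnc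
  set A := x ⬝ᵥ Q.mulVec x with hA_def
  set B := v ⬝ᵥ Q.mulVec v with hB_def
  set D := x ⬝ᵥ Q.mulVec v with hD_def
  set p := c ⬝ᵥ x with hp_def
  set q := c ⬝ᵥ v with hq_def
  have hmul : ∀ a b : ℝ, Q.mulVec (a • x + b • v) = a • Q.mulVec x + b • Q.mulVec v := by
    intro a b
    rw [Matrix.mulVec_add, Matrix.mulVec_smul, Matrix.mulVec_smul]
  have hcdot : ∀ a b : ℝ, c ⬝ᵥ (a • x + b • v) = a * p + b * q := by
    intro a b
    rw [dotProduct_add, dotProduct_smul, dotProduct_smul,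
      smul_eq_mul, smul_eq_mul, ← hp_def, ← hq_def]
  have hquad : ∀ a b : ℝ, (a • x + b • v) ⬝ᵥ Q.mulVec (a • x + b • v)
      = a^2*A + 2*a*b*D + b^2*B := by
    intro a b
    rw [hmul]
    simp only [dotProduct_add, add_dotProduct, smul_dotProduct,
      dotProduct_smul, smul_eq_mul]
    rw [hsym v x, ← hA_def, ← hB_def, ← hD_def]
    ring
  have hApos : 0 < A := by
    rcases (hnn x).lt_or_eq with h | h
    · exact h
    · exfalso
      have h0 : Q.mulVec x = 0 := hz x h.symm
      have h1 := (hpair 1 0 (by simp [h0])).1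
      norm_num at h1
  have hBpos : 0 < B := by
    rcases (hnn v).lt_or_eq with h | h
    · exact h
    · exfalso
      have h0 : Q.mulVec v = 0 := hz v h.symm
      have h1 := (hpair 0 1 (by simp [h0])).2
      norm_num at h1
  have hw0 : (B • x + (-D) • v) ⬝ᵥ Q.mulVec (B • x + (-D) • v) = B*(A*B - D^2) := by
    rw [hquad]; ring
  have hΔ : 0 < A*B - D^2 := by
    have hnn' := hnn (B • x + (-D) • v)
    rw [hw0] at hnn'
    have hne : B*(A*B - D^2) ≠ 0 := by
      intro h0
      have hQw : Q.mulVec (B • x + (-D) • v) = 0 := hz _ (by rw [hw0]; exact h0)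
      rw [hmul] at hQw
      exact hBpos.ne' (hpair B (-D) hQw).1
    have hpos : 0 < B*(A*B - D^2) := lt_of_le_of_ne hnn' (Ne.symm hne)
    by_contra hle
    push_neg at hle
    nlinarith
  have hpq : ¬(p = 0 ∧ q = 0) := by simpa [Prod.ext_iff] using hcxv
  have hV : 0 < B*p^2 - 2*D*p*q + A*q^2 := posV A B D p q hBpos hΔ hpq
  set γ := Ups Q c v x with hγ_def
  set β := Ups Q c x v with hβ_def
  have hγ : γ = p*B - q*D := by
    rw [hγ_def, Ups, ← hp_def, ← hq_def, ← hB_def, ← hD_def]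
  have hβ : β = q*A - p*D := by
    rw [hβ_def, Ups, hsym v x, ← hp_def, ← hq_def, ← hA_def, ← hD_def]
  have hcz : c ⬝ᵥ (γ • x + β • v) = B*p^2 - 2*D*p*q + A*q^2 := by
    rw [hcdot, hγ, hβ]; ring
  have hzQz : (γ • x + β • v) ⬝ᵥ Q.mulVec (γ • x + β • v)
      = (A*B - D^2)*(B*p^2 - 2*D*p*q + A*q^2) := by
    rw [hquad, hγ, hβ]; ring
  -- positivity of the quadratic form on nonzero combinations with positive c-value
  have hSpos : ∀ a b : ℝ, 0 < a*p + b*q → 0 < a^2*A + 2*a*b*D + b^2*B := by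
    intro a b hP
    have hSnn : 0 ≤ a^2*A + 2*a*b*D + b^2*B := by rw [← hquad]; exact hnn _
    rcases hSnn.lt_or_eq with h' | h'
    · exact h'
    · exfalso
      have hQw : Q.mulVec (a • x + b • v) = 0 := hz _ (by rw [hquad]; exact h'.symm)
      rw [hmul] at hQw
      obtain ⟨ha, hb⟩ := hpair a b hQw
      rw [ha, hb] at hP; norm_num at hP
  -- lower bound for Rmap on the span
  have hlow : ∀ a b : ℝ,
      c ⬝ᵥ α - (B*p^2 - 2*D*p*q + A*q^2)/(A*B - D^2) ≤ Rmap Q c α (a • x + b • v) := by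
    intro a b
    rw [Rmap]
    split_ifs with h
    · rw [hcdot] at h
      rw [hcdot, hquad]
      have hS := hSpos a b h
      have hdiv : (a*p+b*q)^2 / (a^2*A + 2*a*b*D + b^2*B)
          ≤ (B*p^2 - 2*D*p*q + A*q^2)/(A*B - D^2) := by
        rw [div_le_div_iff₀ hS hΔ]
        nlinarith [key_id A B D p q a b, sq_nonneg (a*(q*A - p*D) - b*(p*B - q*D))]
      linarith
    · have : 0 < (B*p^2-2*D*p*q+A*q^2)/(A*B-D^2) := div_pos hV hΔ
      linarith
  -- value of Rmap on the positive ray through z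
  have hRz : ∀ s : ℝ, 0 < s → Rmap Q c α (s • (γ • x + β • v))
      = c ⬝ᵥ α - (B*p^2 - 2*D*p*q + A*q^2)/(A*B - D^2) := by
    intro s hs
    have h1 : c ⬝ᵥ (s • (γ • x + β • v)) = s * (B*p^2 - 2*D*p*q + A*q^2) := by
      rw [dotProduct_smul, hcz, smul_eq_mul]
    have h2 : (s • (γ • x + β • v)) ⬝ᵥ Q.mulVec (s • (γ • x + β • v))
        = s^2 * ((A*B - D^2)*(B*p^2 - 2*D*p*q + A*q^2)) := by
      rw [smul_dotProduct, Matrix.mulVec_smul, dotProduct_smul,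
        hzQz, smul_eq_mul, smul_eq_mul]
      ring
    rw [Rmap, if_pos (by rw [h1]; exact mul_pos hs hV), h1, h2]
    congr 1
    rw [div_eq_div_iff (mul_ne_zero (pow_ne_zero 2 hs.ne') (mul_ne_zero hΔ.ne' hV.ne')) hΔ.ne']
    ring
  refine ⟨by rw [hcz]; exact hV, ?_⟩
  ext w
  simp only [Set.mem_setOf_eq]
  constructor
  · rintro ⟨hwmem, hwmin⟩
    rw [SetLike.mem_coe, Submodule.mem_span_pair] at hwmem
    obtain ⟨a, b, hab⟩ := hwmem
    subst hab
    have hzmem : (γ • x + β • v)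
        ∈ (Submodule.span ℝ ({x, v} : Set (Fin N → ℝ)) : Set (Fin N → ℝ)) := by
      rw [SetLike.mem_coe, Submodule.mem_span_pair]
      exact ⟨γ, β, rfl⟩
    have hRz1 : Rmap Q c α (γ • x + β • v)
        = c ⬝ᵥ α - (B*p^2 - 2*D*p*q + A*q^2)/(A*B - D^2) := by
      have := hRz 1 one_pos
      rwa [one_smul] at this
    have h1 := hwmin _ hzmem
    rw [hRz1] at h1
    have h2 := hlow a b
    have heq : Rmap Q c α (a • x + b • v)
        = c ⬝ᵥ α - (B*p^2 - 2*D*p*q + A*q^2)/(A*B - D^2) := le_antisymm h1 h2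
    have hPpos : 0 < a*p + b*q := by
      by_contra hP
      rw [Rmap, if_neg (by rw [hcdot]; exact hP)] at heq
      have hd : 0 < (B*p^2-2*D*p*q+A*q^2)/(A*B-D^2) := div_pos hV hΔ
      linarith
    have hS := hSpos a b hPpos
    rw [Rmap, if_pos (by rw [hcdot]; exact hPpos), hcdot, hquad] at heq
    have hfrac : (a*p+b*q)^2/(a^2*A + 2*a*b*D + b^2*B)
        = (B*p^2 - 2*D*p*q + A*q^2)/(A*B - D^2) := by linarith
    have hcross : (a*p+b*q)^2 * (A*B-D^2)
        = (B*p^2-2*D*p*q+A*q^2) * (a^2*A + 2*a*b*D + b^2*B) :=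
      (div_eq_div_iff hS.ne' hΔ.ne').mp hfrac
    have hsq : (a*(q*A - p*D) - b*(p*B - q*D))^2 = 0 := by
      rw [← key_id A B D p q a b]; linarith
    have hzero : a*(q*A - p*D) - b*(p*B - q*D) = 0 := by
      exact pow_eq_zero_iff two_ne_zero |>.mp hsq
    refine ⟨(a*p + b*q)/(B*p^2 - 2*D*p*q + A*q^2), div_pos hPpos hV, ?_⟩
    have ha : a = (a*p + b*q)/(B*p^2 - 2*D*p*q + A*q^2) * (p*B - q*D) := by
      rw [div_mul_eq_mul_div, eq_div_iff hV.ne']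
      linear_combination q * hzero
    have hb : b = (a*p + b*q)/(B*p^2 - 2*D*p*q + A*q^2) * (q*A - p*D) := by
      rw [div_mul_eq_mul_div, eq_div_iff hV.ne']
      linear_combination (-p) * hzero
    rw [← hγ] at ha
    rw [← hβ] at hb
    rw [smul_add, smul_smul, smul_smul, ← ha, ← hb]
  · rintro ⟨s, hs, rfl⟩
    constructor
    · rw [SetLike.mem_coe, Submodule.mem_span_pair]
      exact ⟨s*γ, s*β, by rw [smul_add, smul_smul, smul_smul]⟩
    · intro z' hz'
      rw [SetLike.mem_coe, Submodule.mem_span_pair] at hz'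
      obtain ⟨a, b, hab⟩ := hz'
      rw [hRz s hs, ← hab]
      exact hlow a b
end

section
/- Let x ∈ C and v ∈ R^N with Qx and Qv non-collinear, and suppose Υ(v;x) > 0, where Υ(a;b) = (c^T b)(a^T Q a) - (c^T a)(b^T Q a). Then with τ = Υ(x;v)/Υ(v;x), the point z_τ = x + τ v satisfies c^T z_τ > 0 and R(z_τ) = min over z ∈ span{x,v} of R(z); in particular t ↦ R(x + t v) attains its minimum at t = τ. -/
open Matrix

theorem stmt10 {N : ℕ} (Q : Matrix (Fin N) (Fin N) ℝ) (hQ : Q.PosSemidef)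
    (α : Fin N → ℝ) (c : Fin N → ℝ) (hc : c = Q.mulVec α) (hc0 : c ≠ 0)
    (x v : Fin N → ℝ) (hx : 0 < c ⬝ᵥ x)
    (hnc : LinearIndependent ℝ ![Q.mulVec x, Q.mulVec v])
    (hU : 0 < Ups Q c v x) :
    0 < c ⬝ᵥ (x + (Ups Q c x v / Ups Q c v x) • v) ∧
    IsLeast {r : ℝ | ∃ z ∈ (Submodule.span ℝ ({x, v} : Set (Fin N → ℝ)) :
        Set (Fin N → ℝ)), Rmap Q c α z = r}
      (Rmap Q c α (x + (Ups Q c x v / Ups Q c v x) • v)) ∧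
    ∀ t : ℝ, Rmap Q c α (x + (Ups Q c x v / Ups Q c v x) • v)
      ≤ Rmap Q c α (x + t • v) := by
  -- symmetry of the quadratic form
  have hQs : Qᵀ = Q := by
    have := hQ.1
    simpa [Matrix.IsHermitian, Matrix.conjTranspose_eq_transpose_of_trivial] using this
  have hsymm : ∀ u w : Fin N → ℝ, u ⬝ᵥ Q.mulVec w = w ⬝ᵥ Q.mulVec u := by
    intro u w
    rw [Matrix.dotProduct_mulVec, ← Matrix.mulVec_transpose, hQs, dotProduct_comm]
  have hnn : ∀ u : Fin N → ℝ, 0 ≤ u ⬝ᵥ Q.mulVec u := fun u => by simpa using hQ.dotProduct_mulVec_nonneg u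
  -- scalar abbreviations
  set p : ℝ := c ⬝ᵥ x with hp
  set q : ℝ := c ⬝ᵥ v with hq
  set a : ℝ := x ⬝ᵥ Q.mulVec x with ha
  set b : ℝ := x ⬝ᵥ Q.mulVec v with hb
  set d : ℝ := v ⬝ᵥ Q.mulVec v with hd
  -- expansion of quadratic form on combinations
  have hexp : ∀ s t : ℝ, (s • x + t • v) ⬝ᵥ Q.mulVec (s • x + t • v)
      = a * s ^ 2 + 2 * b * s * t + d * t ^ 2 := by
    intro s t
    have hbv : v ⬝ᵥ Q.mulVec x = b := by rw [hsymm v x]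
    simp only [Matrix.mulVec_add, Matrix.mulVec_smul, dotProduct_add, add_dotProduct,
      smul_dotProduct, dotProduct_smul, smul_eq_mul]
    rw [hbv, ← ha, ← hb, ← hd]; ring
  have hcz : ∀ s t : ℝ, c ⬝ᵥ (s • x + t • v) = p * s + q * t := by
    intro s t
    simp only [dotProduct_add, dotProduct_smul, smul_eq_mul, ← hp, ← hq]; ring
  -- linear independence consequence
  have hind : ∀ s t : ℝ, s • Q.mulVec x + t • Q.mulVec v = 0 → s = 0 ∧ t = 0 := by
    intro s t h
    have := Fintype.linearIndependent_iff.mp hnc ![s, t] (by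
      simpa [Fin.sum_univ_two] using h)
    exact ⟨this 0, this 1⟩
  -- null vectors of the form
  have hnull : ∀ w : Fin N → ℝ, w ⬝ᵥ Q.mulVec w = 0 → Q.mulVec w = 0 := by
    intro w hw
    funext i
    have hCS : ∀ u : Fin N → ℝ, (u ⬝ᵥ Q.mulVec w) ^ 2
        ≤ (u ⬝ᵥ Q.mulVec u) * (w ⬝ᵥ Q.mulVec w) := by
      intro u
      have h := discrim_le_zero (a := w ⬝ᵥ Q.mulVec w) (b := 2 * (u ⬝ᵥ Q.mulVec w))
        (c := u ⬝ᵥ Q.mulVec u) ?_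
      · rw [discrim] at h; nlinarith [h]
      · intro r
        have h1 := hnn (u + r • w)
        have h2 : (u + r • w) ⬝ᵥ Q.mulVec (u + r • w)
            = (u ⬝ᵥ Q.mulVec u) + 2 * (u ⬝ᵥ Q.mulVec w) * r + (w ⬝ᵥ Q.mulVec w) * r ^ 2 := by
          simp only [Matrix.mulVec_add, Matrix.mulVec_smul, dotProduct_add, add_dotProduct,
            smul_dotProduct, dotProduct_smul, smul_eq_mul, hsymm w u]
          ring
        nlinarith [h1, h2]
    have h1 := hCS (Pi.single i 1)
    rw [hw, mul_zero] at h1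
    have h0 : Pi.single i 1 ⬝ᵥ Q.mulVec w = Q.mulVec w i := by
      simp [single_dotProduct]
    rw [h0] at h1
    have h2 : Q.mulVec w i ^ 2 = 0 := le_antisymm h1 (sq_nonneg _)
    simpa using sq_eq_zero_iff.mp h2
  have hpos2 : ∀ s t : ℝ, ¬(s = 0 ∧ t = 0) → 0 < a * s ^ 2 + 2 * b * s * t + d * t ^ 2 := by
    intro s t hst
    have hge : 0 ≤ a * s ^ 2 + 2 * b * s * t + d * t ^ 2 := by
      rw [← hexp s t]; exact hnn _
    rcases hge.lt_or_eq with h | h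
    · exact h
    · exfalso
      have h0 : (s • x + t • v) ⬝ᵥ Q.mulVec (s • x + t • v) = 0 := by
        rw [hexp]; exact h.symm
      have h1 := hnull _ h0
      rw [Matrix.mulVec_add, Matrix.mulVec_smul, Matrix.mulVec_smul] at h1
      exact hst (hind s t h1)
  -- positivity of key quantities
  have hdet : 0 < a * d - b ^ 2 := by
    have haa : 0 < a := by simpa using hpos2 1 0 (by norm_num)
    have h1 := hpos2 (-b) a (by intro h; exact absurd h.2 (ne_of_gt haa))
    nlinarith [h1, haa]
  have hppos : 0 < p := hx
  set K : ℝ := q ^ 2 * a - 2 * p * q * b + p ^ 2 * d with hK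
  have hKpos : 0 < K := by
    have h1 := hpos2 (-q) p (by intro h; exact absurd h.2 (ne_of_gt hppos))
    rw [hK]; nlinarith [h1]
  -- Ups values
  have hUe : Ups Q c v x = p * d - q * b := by
    rw [Ups, ← hp, ← hq, ← hd, ← hb]
  have hUf : Ups Q c x v = q * a - p * b := by
    rw [Ups, ← hp, ← hq, ← ha, hsymm v x, ← hb]
  set e : ℝ := p * d - q * b with he
  set f : ℝ := q * a - p * b with hf
  have hepos : 0 < e := by rw [← hUe]; exact hU
  have htau : Ups Q c x v / Ups Q c v x = f / e := by rw [hUe, hUf]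
  -- value of c on the minimizer
  have hczt : c ⬝ᵥ (x + (f / e) • v) = K / e := by
    have : x + (f / e) • v = (1 : ℝ) • x + (f / e) • v := by rw [one_smul]
    rw [this, hcz]
    field_simp
    rw [hK, he, hf]; ring
  have hcztpos : 0 < c ⬝ᵥ (x + (f / e) • v) := by
    rw [hczt]; exact div_pos hKpos hepos
  -- quadratic form value at the minimizer
  have hBzt : (x + (f / e) • v) ⬝ᵥ Q.mulVec (x + (f / e) • v) = (a * d - b ^ 2) * K / e ^ 2 := by
    have h1 : x + (f / e) • v = (1 : ℝ) • x + (f / e) • v := by rw [one_smul]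
    rw [h1, hexp]
    have he0 : e ≠ 0 := ne_of_gt hepos
    field_simp
    rw [hK, he, hf]; ring
  -- the minimal value of Rmap
  have hRzt : Rmap Q c α (x + (f / e) • v) = c ⬝ᵥ α - K / (a * d - b ^ 2) := by
    rw [Rmap, if_pos hcztpos, hczt, hBzt]
    have he0 : e ≠ 0 := ne_of_gt hepos
    have hK0 : K ≠ 0 := ne_of_gt hKpos
    have hdet0 : a * d - b ^ 2 ≠ 0 := ne_of_gt hdet
    field_simp
  -- lower bound over the span
  have hlb : ∀ z ∈ (Submodule.span ℝ ({x, v} : Set (Fin N → ℝ)) : Set (Fin N → ℝ)),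
      c ⬝ᵥ α - K / (a * d - b ^ 2) ≤ Rmap Q c α z := by
    intro z hz
    obtain ⟨s, t, rfl⟩ := Submodule.mem_span_pair.mp hz
    rw [Rmap]
    split_ifs with hcz0
    · rw [hcz] at hcz0
      have hst : ¬(s = 0 ∧ t = 0) := by
        rintro ⟨rfl, rfl⟩; simp at hcz0
      have hB : 0 < a * s ^ 2 + 2 * b * s * t + d * t ^ 2 := hpos2 s t hst
      rw [hexp, hcz]
      have hid : K * (a * s ^ 2 + 2 * b * s * t + d * t ^ 2)
          - (a * d - b ^ 2) * (p * s + q * t) ^ 2 = (f * s - e * t) ^ 2 := by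
        rw [hK, hf, he]; ring
      have key : (p * s + q * t) ^ 2 * (a * d - b ^ 2)
          ≤ K * (a * s ^ 2 + 2 * b * s * t + d * t ^ 2) := by
        have := sq_nonneg (f * s - e * t)
        linarith [hid, this]
      have h2 : (p * s + q * t) ^ 2 / (a * s ^ 2 + 2 * b * s * t + d * t ^ 2)
          ≤ K / (a * d - b ^ 2) := by
        rw [div_le_div_iff₀ hB hdet]
        linarith [key]
      linarith [h2]
    · have : 0 ≤ K / (a * d - b ^ 2) := le_of_lt (div_pos hKpos hdet)
      linarith [this]
  rw [htau]
  refine ⟨hcztpos, ⟨⟨x + (f / e) • v, ?_, rfl⟩, ?_⟩, ?_⟩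
  · exact Submodule.mem_span_pair.mpr ⟨1, f / e, by rw [one_smul]⟩
  · rintro r ⟨z, hz, rfl⟩
    rw [hRzt]
    exact hlb z hz
  · intro t
    rw [hRzt]
    exact hlb (x + t • v) (Submodule.mem_span_pair.mpr ⟨1, t, by rw [one_smul]⟩)
end

section
/- Let x ∈ C and v ∈ R^N with Qx and Qv non-collinear, and suppose Υ(v;x) ≤ 0. Then the function t ↦ R(x + t v), t ∈ R, is monotonic and inf over t of R(x + t v) = min{R(-v), R(v)}. -/
open Matrix

/-- Scalar core lemma: along the line, the function is antitone with infimum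
`ca - cv^2/qvv`, under sign conditions coming from positive semidefiniteness. -/
lemma scalar_key (ca cx cv qxx qxv qvv : ℝ) (hcx : 0 < cx) (hcv : 0 < cv)
    (hqvv : 0 < qvv) (hq : ∀ t : ℝ, 0 < qxx + 2*t*qxv + t^2*qvv)
    (hW : 0 ≤ cv^2*qxx - 2*cv*cx*qxv + cx^2*qvv)
    (hU : cx*qvv - cv*qxv ≤ 0) :
    Antitone (fun t : ℝ => if 0 < cx + t*cv then
        ca - (cx + t*cv)^2/(qxx + 2*t*qxv + t^2*qvv) else ca)
    ∧ sInf (Set.range (fun t : ℝ => if 0 < cx + t*cv then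
        ca - (cx + t*cv)^2/(qxx + 2*t*qxv + t^2*qvv) else ca)) = ca - cv^2/qvv := by
  set f : ℝ → ℝ := fun t => if 0 < cx + t*cv then
      ca - (cx + t*cv)^2/(qxx + 2*t*qxv + t^2*qvv) else ca with hf
  have hle : ∀ t : ℝ, f t ≤ ca := by
    intro t
    simp only [hf]
    split_ifs with h
    · have := div_nonneg (sq_nonneg (cx + t*cv)) (hq t).le
      linarith
    · exact le_rfl
  have hmono : Antitone f := by
    intro s t hst
    by_cases hps : 0 < cx + s*cv
    · have hpt : 0 < cx + t*cv := by nlinarith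
      simp only [hf, if_pos hps, if_pos hpt]
      have hqs := hq s
      have hqt := hq t
      have key : (cx + s*cv)^2/(qxx + 2*s*qxv + s^2*qvv)
          ≤ (cx + t*cv)^2/(qxx + 2*t*qxv + t^2*qvv) := by
        rw [div_le_div_iff₀ hqs hqt]
        set W := cv^2*qxx - 2*cv*cx*qxv + cx^2*qvv with hWdef
        set U := cx*qvv - cv*qxv with hUdef
        have h1 : 0 ≤ 2*(t-s)*(cx+s*cv)*(W - (cx+s*cv)*U) := by
          have : 0 ≤ W - (cx+s*cv)*U := by nlinarith [mul_nonneg hps.le (neg_nonneg.mpr hU)]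
          have h2 : 0 ≤ (t-s) := by linarith
          positivity
        have h2 : 0 ≤ cv*(t-s)^2*(W - 2*(cx+s*cv)*U) := by
          have : 0 ≤ W - 2*(cx+s*cv)*U := by nlinarith [mul_nonneg hps.le (neg_nonneg.mpr hU)]
          positivity
        have hid : cv*((cx + t*cv)^2*(qxx + 2*s*qxv + s^2*qvv)
            - (cx + s*cv)^2*(qxx + 2*t*qxv + t^2*qvv))
            = 2*(t-s)*(cx+s*cv)*(W - (cx+s*cv)*U) + cv*(t-s)^2*(W - 2*(cx+s*cv)*U) := by
          simp only [hWdef, hUdef]; ring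
        have h3 : cv * 0 ≤ cv * ((cx + t*cv)^2*(qxx + 2*s*qxv + s^2*qvv)
            - (cx + s*cv)^2*(qxx + 2*t*qxv + t^2*qvv)) := by
          rw [mul_zero, hid]; linarith
        have h4 := le_of_mul_le_mul_left h3 hcv
        linarith
      linarith
    · have hfs : f s = ca := if_neg hps
      rw [hfs]
      exact hle t
  have hlb : ∀ t : ℝ, ca - cv^2/qvv ≤ f t := by
    intro t
    simp only [hf]
    split_ifs with h
    · have hqt := hq t
      have key : (cx + t*cv)^2/(qxx + 2*t*qxv + t^2*qvv) ≤ cv^2/qvv := by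
        rw [div_le_div_iff₀ hqt hqvv]
        nlinarith [mul_nonneg h.le (neg_nonneg.mpr hU), hW]
      linarith
    · have : 0 ≤ cv^2/qvv := by positivity
      linarith
  have hT : Filter.Tendsto f Filter.atTop (nhds (ca - cv^2/qvv)) := by
    have h0 : Filter.Tendsto (fun t : ℝ => t⁻¹) Filter.atTop (nhds 0) :=
      tendsto_inv_atTop_zero
    have hcont : ContinuousAt (fun u : ℝ =>
        ca - (cx*u+cv)^2/(qxx*u^2+2*qxv*u+qvv)) 0 := by
      apply ContinuousAt.sub continuousAt_const
      apply ContinuousAt.div (by fun_prop) (by fun_prop)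
      norm_num
      exact hqvv.ne'
    have hg : Filter.Tendsto (fun u : ℝ =>
        ca - (cx*u+cv)^2/(qxx*u^2+2*qxv*u+qvv)) (nhds 0) (nhds (ca - cv^2/qvv)) := by
      have := hcont.tendsto
      norm_num at this
      exact this
    refine (hg.comp h0).congr' ?_
    filter_upwards [Filter.eventually_gt_atTop (0:ℝ)] with t ht
    have ht' : t ≠ 0 := ht.ne'
    have hpt : 0 < cx + t*cv := by positivity
    have hden : qxx*(t⁻¹)^2+2*qxv*t⁻¹+qvv = (qxx + 2*t*qxv + t^2*qvv)*(t⁻¹)^2 := by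
      field_simp
    have hnum : (cx*t⁻¹+cv)^2 = (cx + t*cv)^2*(t⁻¹)^2 := by
      field_simp
    simp only [Function.comp, hf, if_pos hpt]
    rw [hnum, hden, mul_div_mul_right _ _ (by positivity : ((t:ℝ)⁻¹)^2 ≠ 0)]
  have hbdd : BddBelow (Set.range f) := by
    refine ⟨ca - cv^2/qvv, ?_⟩
    rintro y ⟨t, rfl⟩
    exact hlb t
  have h1 := tendsto_atTop_ciInf hmono hbdd
  have h2 : (⨅ t, f t) = ca - cv^2/qvv := tendsto_nhds_unique h1 hT
  refine ⟨hmono, ?_⟩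
  rw [show sInf (Set.range f) = ⨅ t, f t from rfl]
  exact h2

theorem stmt11 {N : ℕ} (Q : Matrix (Fin N) (Fin N) ℝ) (hQ : Q.PosSemidef)
    (α : Fin N → ℝ) (c : Fin N → ℝ) (hc : c = Q.mulVec α) (hc0 : c ≠ 0)
    (x v : Fin N → ℝ) (hx : 0 < c ⬝ᵥ x)
    (hnc : LinearIndependent ℝ ![Q.mulVec x, Q.mulVec v])
    (hU : Ups Q c v x ≤ 0) :
    (Monotone (fun t : ℝ => Rmap Q c α (x + t • v)) ∨
      Antitone (fun t : ℝ => Rmap Q c α (x + t • v))) ∧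
    sInf (Set.range (fun t : ℝ => Rmap Q c α (x + t • v)))
      = min (Rmap Q c α (-v)) (Rmap Q c α v) := by
  have hsym : ∀ a b : Fin N → ℝ, a ⬝ᵥ Q.mulVec b = b ⬝ᵥ Q.mulVec a := by
    intro a b
    rw [dotProduct_mulVec, ← mulVec_transpose,
      ← conjTranspose_eq_transpose_of_trivial, hQ.1, dotProduct_comm]
  have hpsd : ∀ a : Fin N → ℝ, 0 ≤ a ⬝ᵥ Q.mulVec a := by
    intro a
    simpa using hQ.dotProduct_mulVec_nonneg a
  set cx := c ⬝ᵥ x with hcx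
  set cv := c ⬝ᵥ v with hcv
  set qxx := x ⬝ᵥ Q.mulVec x with hqxx
  set qxv := x ⬝ᵥ Q.mulVec v with hqxv
  set qvv := v ⬝ᵥ Q.mulVec v with hqvv
  have hpair := LinearIndependent.pair_iff.mp hnc
  have hqvv0 : 0 < qvv := by
    rcases lt_or_eq_of_le (hpsd v) with h | h
    · exact h
    · exfalso
      have hz : Q.mulVec v = 0 := by
        have := (hQ.dotProduct_mulVec_zero_iff v)
        simp only [star_trivial] at this
        exact this.mp h.symm
      have := (hpair 0 1 (by simp [hz])).2
      norm_num at this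
  have hq' : ∀ t : ℝ, 0 < qxx + 2*t*qxv + t^2*qvv := by
    intro t
    have hexp : (x + t • v) ⬝ᵥ Q.mulVec (x + t • v) = qxx + 2*t*qxv + t^2*qvv := by
      simp only [mulVec_add, mulVec_smul, dotProduct_add, add_dotProduct,
        dotProduct_smul, smul_dotProduct, smul_eq_mul, hqxx, hqxv, hqvv]
      rw [hsym v x]
      ring
    rcases lt_or_eq_of_le (hpsd (x + t • v)) with h | h
    · rw [hexp] at h; exact h
    · exfalso
      have hz : Q.mulVec (x + t • v) = 0 := by
        have := (hQ.dotProduct_mulVec_zero_iff (x + t • v))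
        simp only [star_trivial] at this
        exact this.mp h.symm
      rw [mulVec_add, mulVec_smul] at hz
      have := (hpair 1 t (by simpa using hz)).1
      norm_num at this
  have hW : 0 ≤ cv^2*qxx - 2*cv*cx*qxv + cx^2*qvv := by
    have h := hpsd (cv • x - cx • v)
    have hexp : (cv • x - cx • v) ⬝ᵥ Q.mulVec (cv • x - cx • v)
        = cv^2*qxx - 2*cv*cx*qxv + cx^2*qvv := by
      simp only [mulVec_sub, mulVec_smul, dotProduct_sub, sub_dotProduct,
        dotProduct_smul, smul_dotProduct, smul_eq_mul, hqxx, hqxv, hqvv]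
      rw [hsym v x]
      ring
    rw [hexp] at h
    exact h
  have hU' : cx*qvv - cv*qxv ≤ 0 := hU
  have hRmap : ∀ t : ℝ, Rmap Q c α (x + t • v)
      = if 0 < cx + t*cv then (c ⬝ᵥ α) - (cx + t*cv)^2/(qxx + 2*t*qxv + t^2*qvv)
        else (c ⬝ᵥ α) := by
    intro t
    have h1 : c ⬝ᵥ (x + t • v) = cx + t*cv := by
      simp [dotProduct_add, dotProduct_smul, hcx, hcv, smul_eq_mul]
    have h2 : (x + t • v) ⬝ᵥ Q.mulVec (x + t • v) = qxx + 2*t*qxv + t^2*qvv := by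
      simp only [mulVec_add, mulVec_smul, dotProduct_add, add_dotProduct,
        dotProduct_smul, smul_dotProduct, smul_eq_mul, hqxx, hqxv, hqvv]
      rw [hsym v x]
      ring
    rw [Rmap, h1, h2]
  have hRv : 0 < cv → Rmap Q c α v = (c ⬝ᵥ α) - cv^2/qvv := by
    intro h
    rw [Rmap, if_pos (hcv ▸ h)]
  have hRnv : cv < 0 → Rmap Q c α (-v) = (c ⬝ᵥ α) - cv^2/qvv := by
    intro h
    have h1 : c ⬝ᵥ (-v) = -cv := by simp [hcv]
    have h2 : (-v) ⬝ᵥ Q.mulVec (-v) = qvv := by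
      rw [mulVec_neg, dotProduct_neg, neg_dotProduct, neg_neg]
    rw [Rmap, h1, h2, if_pos (by linarith)]
    ring_nf
  have hRvz : ¬ (0 < cv) → Rmap Q c α v = c ⬝ᵥ α := by
    intro h
    rw [Rmap, if_neg (hcv ▸ h)]
  have hRnvz : ¬ (0 < -cv) → Rmap Q c α (-v) = c ⬝ᵥ α := by
    intro h
    have h1 : c ⬝ᵥ (-v) = -cv := by simp [hcv]
    rw [Rmap, h1, if_neg h]
  rcases lt_trichotomy cv 0 with hsgn | hsgn | hsgn
  · -- cv < 0 : use scalar_key with -cv, -qxv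
    obtain ⟨hA, hI⟩ := scalar_key (c ⬝ᵥ α) cx (-cv) qxx (-qxv) qvv hx (by linarith) hqvv0
      (fun t => by have := hq' (-t); ring_nf at this ⊢; linarith)
      (by ring_nf; ring_nf at hW; linarith)
      (by ring_nf; ring_nf at hU'; linarith)
    set F : ℝ → ℝ := fun t => if 0 < cx + t*(-cv) then
        (c ⬝ᵥ α) - (cx + t*(-cv))^2/(qxx + 2*t*(-qxv) + t^2*qvv) else (c ⬝ᵥ α) with hFdef
    have hfeq : (fun t : ℝ => Rmap Q c α (x + t • v)) = fun t : ℝ => F (-t) := by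
      funext t
      have e1 : cx + (-t)*(-cv) = cx + t*cv := by ring
      have e2 : qxx + 2*(-t)*(-qxv) + (-t)^2*qvv = qxx + 2*t*qxv + t^2*qvv := by ring
      rw [hRmap t]
      simp only [hFdef, e1, e2]
    have hrange : Set.range (fun t : ℝ => F (-t)) = Set.range F := by
      exact Function.Surjective.range_comp neg_surjective F
    constructor
    · left
      rw [hfeq]
      intro a b hab
      exact hA (neg_le_neg hab)
    · rw [hfeq, hrange, hI, hRnv hsgn, hRvz (by linarith), neg_sq]
      exact (min_eq_left (by nlinarith [div_nonneg (sq_nonneg cv) hqvv0.le])).symm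
  · -- cv = 0 : contradiction
    exfalso
    have : cx * qvv ≤ 0 := by
      have := hU'
      rw [hsgn] at this
      linarith
    nlinarith
  · -- cv > 0
    obtain ⟨hA, hI⟩ := scalar_key (c ⬝ᵥ α) cx cv qxx qxv qvv hx hsgn hqvv0 hq' hW hU'
    have hfeq : (fun t : ℝ => Rmap Q c α (x + t • v)) = fun t : ℝ =>
        if 0 < cx + t*cv then (c ⬝ᵥ α) - (cx + t*cv)^2/(qxx + 2*t*qxv + t^2*qvv)
        else (c ⬝ᵥ α) := funext hRmap
    constructor
    · right
      rw [hfeq]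
      exact hA
    · rw [hfeq, hI, hRv hsgn, hRnvz (by linarith)]
      exact (min_eq_right (by nlinarith [div_nonneg (sq_nonneg cv) hqvv0.le])).symm
end

section
/- Let x ∈ C and v ∈ R^N be such that R(x) ≤ min{R(-v), R(v)} and Λ(x; v) ≠ 0, where Λ(x;v) = 2 s_x v^T(s_x Q x - c). Then Υ(v;x) = (c^T x)(v^T Q v) - (c^T v)(x^T Q v) > 0. -/
open Matrix

theorem stmt13 {N : ℕ} (Q : Matrix (Fin N) (Fin N) ℝ) (hQ : Q.PosSemidef)
    (α : Fin N → ℝ) (c : Fin N → ℝ) (hc : c = Q.mulVec α) (hc0 : c ≠ 0)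
    (x v : Fin N → ℝ) (hx : 0 < c ⬝ᵥ x)
    (hR : Rmap Q c α x ≤ min (Rmap Q c α (-v)) (Rmap Q c α v))
    (hΛ : 2 * ((c ⬝ᵥ x) / (x ⬝ᵥ Q.mulVec x)) *
      (v ⬝ᵥ (((c ⬝ᵥ x) / (x ⬝ᵥ Q.mulVec x)) • Q.mulVec x - c)) ≠ 0) :
    0 < (c ⬝ᵥ x) * (v ⬝ᵥ Q.mulVec v) - (c ⬝ᵥ v) * (x ⬝ᵥ Q.mulVec v) := by
  have hT : Qᵀ = Q := by
    have := hQ.1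
    rwa [IsHermitian, conjTranspose_eq_transpose_of_trivial] at this
  have hsymm : ∀ u w : Fin N → ℝ, u ⬝ᵥ Q.mulVec w = w ⬝ᵥ Q.mulVec u := by
    intro u w
    rw [dotProduct_mulVec, dotProduct_comm, ← mulVec_transpose, hT]
  have hnn : ∀ u : Fin N → ℝ, 0 ≤ u ⬝ᵥ Q.mulVec u := by
    intro u
    have := hQ.dotProduct_mulVec_nonneg u
    simpa using this
  have hkey_pos : ∀ u : Fin N → ℝ, 0 < c ⬝ᵥ u → 0 < u ⬝ᵥ Q.mulVec u := by
    intro u hu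
    rcases lt_or_eq_of_le (hnn u) with h | h
    · exact h
    · exfalso
      have h0 : Q.mulVec u = 0 := by
        have := (hQ.dotProduct_mulVec_zero_iff u).mp (by simpa using h.symm)
        exact this
      have : c ⬝ᵥ u = 0 := by
        rw [hc, dotProduct_comm, hsymm u α, h0, dotProduct_zero]
      linarith
  set a := c ⬝ᵥ x with ha
  set b := c ⬝ᵥ v with hb
  set qx := x ⬝ᵥ Q.mulVec x with hqxd
  set qv := v ⬝ᵥ Q.mulVec v with hqvd
  set p := x ⬝ᵥ Q.mulVec v with hpd
  have hqx : 0 < qx := hkey_pos x hx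
  have hqv : 0 ≤ qv := hnn v
  -- Cauchy-Schwarz
  have hCS : p ^ 2 ≤ qx * qv := by
    have hq : ∀ t : ℝ, 0 ≤ qv * (t * t) + (2 * p) * t + qx := by
      intro t
      have h0 := hnn (x + t • v)
      have hexp : (x + t • v) ⬝ᵥ Q.mulVec (x + t • v)
          = qv * (t * t) + (2 * p) * t + qx := by
        rw [mulVec_add, mulVec_smul, add_dotProduct, dotProduct_add, dotProduct_add,
          smul_dotProduct, dotProduct_smul, dotProduct_smul]
        have h1 : v ⬝ᵥ Q.mulVec x = p := hsymm v x
        rw [h1]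
        simp [smul_eq_mul]
        ring
      linarith [hexp ▸ h0]
    have hd := discrim_le_zero hq
    rw [discrim] at hd
    nlinarith [hd]
  -- the min hypothesis gives b^2 * qx ≤ a^2 * qv
  have hkey : b ^ 2 * qx ≤ a ^ 2 * qv := by
    have hRx : Rmap Q c α x = c ⬝ᵥ α - a ^ 2 / qx := by
      rw [Rmap, if_pos hx]
    rcases lt_trichotomy b 0 with hbneg | hbz | hbpos
    · have hcv : 0 < c ⬝ᵥ (-v) := by
        rw [dotProduct_neg]; linarith
      have hqnv : (-v) ⬝ᵥ Q.mulVec (-v) = qv := by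
        rw [mulVec_neg, dotProduct_neg, neg_dotProduct, neg_neg]
      have hqv' : 0 < qv := by
        have := hkey_pos (-v) hcv
        rwa [hqnv] at this
      have hRv : Rmap Q c α (-v) = c ⬝ᵥ α - b ^ 2 / qv := by
        rw [Rmap, if_pos hcv, hqnv, dotProduct_neg, ← hb]
        ring_nf
      have h1 : Rmap Q c α x ≤ Rmap Q c α (-v) := le_trans hR (min_le_left _ _)
      rw [hRx, hRv] at h1
      have h2 : b ^ 2 / qv ≤ a ^ 2 / qx := by linarith
      rw [div_le_div_iff₀ hqv' hqx] at h2
      linarith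
    · rw [hbz]
      nlinarith [sq_nonneg a]
    · have hqv' : 0 < qv := hkey_pos v hbpos
      have hRv : Rmap Q c α v = c ⬝ᵥ α - b ^ 2 / qv := by
        rw [Rmap, if_pos hbpos]
      have h1 : Rmap Q c α x ≤ Rmap Q c α v := le_trans hR (min_le_right _ _)
      rw [hRx, hRv] at h1
      have h2 : b ^ 2 / qv ≤ a ^ 2 / qx := by linarith
      rw [div_le_div_iff₀ hqv' hqx] at h2
      linarith
  -- the Λ ≠ 0 hypothesis gives a * p ≠ b * qx
  have hne : a * p ≠ b * qx := by
    intro heq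
    apply hΛ
    rw [dotProduct_sub, dotProduct_smul, hsymm v x]
    rw [smul_eq_mul, ← hpd, dotProduct_comm v c, ← hb]
    have : a / qx * p - b = 0 := by
      field_simp
      linarith
    rw [this, mul_zero]
  have hsq : 0 < (a * p - b * qx) ^ 2 := by
    have := sub_ne_zero.mpr hne
    positivity
  by_contra hcon
  push_neg at hcon
  have h1 : a * qv ≤ b * p := by linarith
  nlinarith [mul_le_mul_of_nonneg_left h1 (by positivity : (0:ℝ) ≤ 2 * a * qx),
    mul_le_mul_of_nonneg_left hkey (le_of_lt hqx),
    mul_le_mul_of_nonneg_left hCS (sq_nonneg a), hsq]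
end

section
/- Let x ∈ C and v ∈ R^N with Qx and Qv non-collinear. Then the improvement I_R(x;v) := R(x) - min over z ∈ span{x,v} of R(z) equals (v^T(s_x Q x - c))^2 / ((v^T Q v) - (v^T Q x)^2/(x^T Q x)), where s_x = (c^T x)/(x^T Q x). If Qx and Qv are collinear, then I_R(x;v) = 0. -/
open Matrix

/-- Improvement of an exact line search of `R` from `x` along `v`:
`R(x) - min_{z ∈ span{x,v}} R(z)`. -/
noncomputable def IR {N : ℕ} (Q : Matrix (Fin N) (Fin N) ℝ) (c α : Fin N → ℝ)
    (x v : Fin N → ℝ) : ℝ :=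
  Rmap Q c α x -
    sInf (Rmap Q c α '' (Submodule.span ℝ ({x, v} : Set (Fin N → ℝ)) :
      Set (Fin N → ℝ)))

lemma sym_dot {N : ℕ} {Q : Matrix (Fin N) (Fin N) ℝ} (hQ : Q.PosSemidef) (a b : Fin N → ℝ) :
    a ⬝ᵥ Q.mulVec b = b ⬝ᵥ Q.mulVec a := by
  have h : Qᵀ = Q := by
    simpa [Matrix.conjTranspose_eq_transpose_of_trivial] using hQ.1.eq
  rw [dotProduct_mulVec, ← mulVec_transpose, h, dotProduct_comm]

lemma qnonneg {N : ℕ} {Q : Matrix (Fin N) (Fin N) ℝ} (hQ : Q.PosSemidef) (z : Fin N → ℝ) :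
    0 ≤ z ⬝ᵥ Q.mulVec z := by simpa using hQ.dotProduct_mulVec_nonneg z

lemma qzero {N : ℕ} {Q : Matrix (Fin N) (Fin N) ℝ} (hQ : Q.PosSemidef) (z : Fin N → ℝ)
    (h : z ⬝ᵥ Q.mulVec z = 0) : Q.mulVec z = 0 := by
  rw [← hQ.dotProduct_mulVec_zero_iff]; simpa using h

theorem stmt14 {N : ℕ} (Q : Matrix (Fin N) (Fin N) ℝ) (hQ : Q.PosSemidef)
    (α : Fin N → ℝ) (c : Fin N → ℝ) (hc : c = Q.mulVec α) (hc0 : c ≠ 0)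
    (x v : Fin N → ℝ) (hx : 0 < c ⬝ᵥ x) :
    (LinearIndependent ℝ ![Q.mulVec x, Q.mulVec v] →
      IR Q c α x v
        = (v ⬝ᵥ (((c ⬝ᵥ x) / (x ⬝ᵥ Q.mulVec x)) • Q.mulVec x - c)) ^ 2 /
          ((v ⬝ᵥ Q.mulVec v) - (v ⬝ᵥ Q.mulVec x) ^ 2 / (x ⬝ᵥ Q.mulVec x))) ∧
    (¬ LinearIndependent ℝ ![Q.mulVec x, Q.mulVec v] → IR Q c α x v = 0) := by
  have hsym := sym_dot hQ
  have hcz : ∀ z, c ⬝ᵥ z = α ⬝ᵥ Q.mulVec z := by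
    intro z; rw [hc, dotProduct_comm, hsym]
  have hqpos : ∀ z, 0 < c ⬝ᵥ z → 0 < z ⬝ᵥ Q.mulVec z := by
    intro z hz
    rcases (qnonneg hQ z).lt_or_eq with h | h
    · exact h
    · exfalso
      have h0 : Q.mulVec z = 0 := qzero hQ z h.symm
      rw [hcz z, h0, dotProduct_zero] at hz; exact lt_irrefl 0 hz
  have hA : 0 < x ⬝ᵥ Q.mulVec x := hqpos x hx
  have hquad : ∀ a b : ℝ, (a • x + b • v) ⬝ᵥ Q.mulVec (a • x + b • v)
      = a^2 * (x ⬝ᵥ Q.mulVec x) + 2*a*b*(x ⬝ᵥ Q.mulVec v) + b^2*(v ⬝ᵥ Q.mulVec v) := by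
    intro a b
    simp only [mulVec_add, mulVec_smul, dotProduct_add, add_dotProduct,
      dotProduct_smul, smul_dotProduct, smul_eq_mul]
    rw [hsym v x]
    ring
  have hlin : ∀ a b : ℝ, c ⬝ᵥ (a • x + b • v) = a * (c ⬝ᵥ x) + b * (c ⬝ᵥ v) := by
    intro a b
    simp only [dotProduct_add, dotProduct_smul, smul_eq_mul]
  -- goal rewriting : replace v ⬝ᵥ Q.mulVec x by x ⬝ᵥ Q.mulVec v in goal
  rw [hsym v x] at *
  set A := x ⬝ᵥ Q.mulVec x with hAdef
  set B := x ⬝ᵥ Q.mulVec v with hBdef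
  set D := v ⬝ᵥ Q.mulVec v with hDdef
  set p := c ⬝ᵥ x with hpdef
  set r := c ⬝ᵥ v with hrdef
  set S : Set ℝ := Rmap Q c α '' (Submodule.span ℝ ({x, v} : Set (Fin N → ℝ)) :
      Set (Fin N → ℝ)) with hS
  constructor
  · intro hLI
    -- determinant positivity
    have hwq : (B • x + (-A) • v) ⬝ᵥ Q.mulVec (B • x + (-A) • v) = A * (A*D - B*B) := by
      rw [hquad]; ring
    have hwpos : 0 < (B • x + (-A) • v) ⬝ᵥ Q.mulVec (B • x + (-A) • v) := by
      rcases (qnonneg hQ _).lt_or_eq with h | h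
      · exact h
      · exfalso
        have h0 : Q.mulVec (B • x + (-A) • v) = 0 := qzero hQ _ h.symm
        rw [mulVec_add, mulVec_smul, mulVec_smul] at h0
        have hv : Q.mulVec v = (B/A) • Q.mulVec x := by
          have : A • Q.mulVec v = B • Q.mulVec x := by
            have := h0
            rw [add_eq_zero_iff_eq_neg] at this
            rw [← neg_smul, neg_neg] at this
            exact this.symm
          funext i
          have h2 := congrFun this i
          simp only [Pi.smul_apply, smul_eq_mul] at h2 ⊢
          field_simp
          linarith [h2]
        rw [linearIndependent_fin2] at hLI
        simp only [Matrix.cons_val_one, Matrix.head_cons, Matrix.cons_val_zero] at hLI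
        by_cases hBA : B/A = 0
        · exact hLI.1 (by rw [hv, hBA, zero_smul])
        · exact hLI.2 ((B/A)⁻¹) (by rw [hv, smul_smul, inv_mul_cancel₀ hBA, one_smul])
    have hdet : 0 < A * D - B * B := by nlinarith [hA, hwpos, hwq]
    set M : ℝ := (D*p^2 - 2*B*p*r + A*r^2) / (A * D - B * B) with hMdef
    have hMp : p^2/A ≤ M := by
      rw [hMdef, div_le_div_iff₀ hA hdet]
      nlinarith [sq_nonneg (A*r - B*p)]
    have hM0 : 0 < M := lt_of_lt_of_le (div_pos (pow_pos hx 2) hA) hMp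
    have hzc : c ⬝ᵥ (((D*p - B*r)/(A*D-B*B)) • x + ((A*r - B*p)/(A*D-B*B)) • v) = M := by
      rw [hlin, hMdef]; field_simp; ring
    have hzq : (((D*p - B*r)/(A*D-B*B)) • x + ((A*r - B*p)/(A*D-B*B)) • v) ⬝ᵥ
        Q.mulVec (((D*p - B*r)/(A*D-B*B)) • x + ((A*r - B*p)/(A*D-B*B)) • v) = M := by
      rw [hquad, hMdef]; obtain ⟨E, hE⟩ : ∃ E, E = A*D - B*B := ⟨_, rfl⟩; have hE0 : E ≠ 0 := hE ▸ hdet.ne'; rw [← hE]; field_simp; rw [hE]; ring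
    have hmem : c ⬝ᵥ α - M ∈ S := by
      refine ⟨_, Submodule.mem_span_pair.mpr
        ⟨(D*p - B*r)/(A*D-B*B), (A*r - B*p)/(A*D-B*B), rfl⟩, ?_⟩
      rw [Rmap, if_pos (hzc ▸ hM0), hzc, hzq, sq, mul_div_assoc,
        div_self (ne_of_gt hM0), mul_one]
    have hlb : ∀ y ∈ S, c ⬝ᵥ α - M ≤ y := by
      rintro y ⟨z, hzmem, rfl⟩
      obtain ⟨a, b, rfl⟩ := Submodule.mem_span_pair.mp hzmem
      rw [Rmap]
      split_ifs with h
      · have hq := hqpos _ h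
        have key : (c ⬝ᵥ (a•x+b•v))^2 ≤ M * ((a•x+b•v) ⬝ᵥ Q.mulVec (a•x+b•v)) := by
          rw [hlin, hquad, hMdef, div_mul_eq_mul_div, le_div_iff₀ hdet]
          nlinarith [sq_nonneg (a*(A*r - B*p) + b*(B*r - D*p))]
        have hle : (c ⬝ᵥ (a•x+b•v))^2 / ((a•x+b•v) ⬝ᵥ Q.mulVec (a•x+b•v)) ≤ M := by
          rw [div_le_iff₀ hq]; exact key
        linarith
      · linarith
    have hInf : sInf S = c ⬝ᵥ α - M :=
      le_antisymm (csInf_le ⟨c ⬝ᵥ α - M, fun y hy => hlb y hy⟩ hmem)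
        (le_csInf ⟨_, hmem⟩ hlb)
    rw [IR, ← hS, hInf, Rmap, if_pos hx]
    simp only [dotProduct_sub, dotProduct_smul, smul_eq_mul]
    rw [hsym v x, ← hBdef, dotProduct_comm v c, ← hrdef, ← hpdef, ← hAdef]
    have hden : 0 < D - B^2/A := by
      have : D - B^2/A = (A*D - B*B)/A := by field_simp
      rw [this]; exact div_pos hdet hA
    rw [eq_div_iff (ne_of_gt hden), hMdef]
    obtain ⟨E, hE⟩ : ∃ E, E = A*D - B*B := ⟨_, rfl⟩; have hE0 : E ≠ 0 := hE ▸ hdet.ne'; rw [← hE]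
    field_simp
    rw [hE]; ring
  · intro hLI
    obtain ⟨t, ht⟩ : ∃ t : ℝ, Q.mulVec v = t • Q.mulVec x := by
      rw [linearIndependent_fin2] at hLI
      push_neg at hLI
      simp only [Matrix.cons_val_one, Matrix.head_cons, Matrix.cons_val_zero] at hLI
      by_cases h0 : Q.mulVec v = 0
      · exact ⟨0, by simp [h0]⟩
      · obtain ⟨a, ha⟩ := hLI h0
        have ha0 : a ≠ 0 := by
          rintro rfl
          have hx0 : Q.mulVec x = 0 := by simpa using ha.symm
          rw [hpdef, hcz x, hx0, dotProduct_zero] at hx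
          exact lt_irrefl _ hx
        exact ⟨a⁻¹, by rw [← ha, smul_smul, inv_mul_cancel₀ ha0, one_smul]⟩
    have hrt : r = t * p := by
      rw [hrdef, hcz v, ht, dotProduct_smul, smul_eq_mul, ← hcz x, hpdef]
    have hB : B = t * A := by
      rw [hBdef, ht, dotProduct_smul, smul_eq_mul, hAdef]
    have hD : D = t^2 * A := by
      rw [hDdef, ht, dotProduct_smul, smul_eq_mul, hsym v x, ← hBdef, hB]; ring
    have hmemx : c ⬝ᵥ α - p^2/A ∈ S := by
      refine ⟨x, Submodule.mem_span_pair.mpr ⟨1, 0, by simp⟩, ?_⟩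
      rw [Rmap, if_pos hx]
    have hlb : ∀ y ∈ S, c ⬝ᵥ α - p^2/A ≤ y := by
      rintro y ⟨z, hzmem, rfl⟩
      obtain ⟨a, b, rfl⟩ := Submodule.mem_span_pair.mp hzmem
      rw [Rmap]
      split_ifs with h
      · have hcz2 : c ⬝ᵥ (a•x+b•v) = (a+b*t)*p := by rw [hlin, hrt]; ring
        have hq2 : (a•x+b•v) ⬝ᵥ Q.mulVec (a•x+b•v) = (a+b*t)^2*A := by
          rw [hquad, hB, hD]; ring
        have habt : a+b*t ≠ 0 := by
          intro h0; rw [hcz2, h0, zero_mul] at h; exact lt_irrefl _ h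
        rw [hcz2, hq2, mul_pow, mul_div_mul_left _ _ (pow_ne_zero 2 habt)]
      · have : 0 < p^2/A := div_pos (pow_pos hx 2) hA
        linarith
    have hInf : sInf S = c ⬝ᵥ α - p^2/A :=
      le_antisymm (csInf_le ⟨_, fun y hy => hlb y hy⟩ hmemx)
        (le_csInf ⟨_, hmemx⟩ hlb)
    rw [IR, ← hS, hInf, Rmap, if_pos hx, ← hpdef, ← hAdef]
    ring
end

section
/- Let x ∈ C and v ∈ R^N with Qx, Qv non-collinear. Then I_R(x;v) = I_D(s_x x; v) · A(x;v), where I_D(y;v) = (v^T(Qy - c))^2/(v^T Q v) and A(x;v) = (1 - (v^T Q x)^2/((v^T Q v)(x^T Q x)))^{-1}; moreover A(x;v) ≥ 1. -/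
open Matrix

lemma aux_zero {N : ℕ} {Q : Matrix (Fin N) (Fin N) ℝ} (hQ : Q.PosSemidef)
    {y : Fin N → ℝ} (h : y ⬝ᵥ Q.mulVec y = 0) : Q.mulVec y = 0 := by
  have := (hQ.dotProduct_mulVec_zero_iff y).mp (by simpa using h)
  simpa using this

lemma aux_alg (a b p n : ℝ) (ha : 0 < a) (hb : 0 < b) (hcs : p ^ 2 < b * a) :
    n ^ 2 / (b - p ^ 2 / a) = n ^ 2 / b * (1 - p ^ 2 / (b * a))⁻¹ := by
  have h2 : b - p ^ 2 / a ≠ 0 := by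
    have : p ^ 2 / a < b := (div_lt_iff₀ ha).mpr (by linarith)
    linarith
  have h1 : 1 - p ^ 2 / (b * a) ≠ 0 := by
    have : p ^ 2 / (b * a) < 1 := (div_lt_one (by positivity)).mpr hcs
    linarith
  have h3 : a * b - p ^ 2 ≠ 0 := by nlinarith
  have h4 : a * b ^ 2 - b * p ^ 2 ≠ 0 := by
    have : a * b ^ 2 - b * p ^ 2 = b * (a * b - p ^ 2) := by ring
    rw [this]
    exact mul_ne_zero (ne_of_gt hb) h3
  have h5 : b * a - p ^ 2 ≠ 0 := by nlinarith
  field_simp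

theorem stmt16 {N : ℕ} (Q : Matrix (Fin N) (Fin N) ℝ) (hQ : Q.PosSemidef)
    (α : Fin N → ℝ) (c : Fin N → ℝ) (hc : c = Q.mulVec α) (hc0 : c ≠ 0)
    (x v : Fin N → ℝ) (hx : 0 < c ⬝ᵥ x)
    (hnc : LinearIndependent ℝ ![Q.mulVec x, Q.mulVec v]) :
    (v ⬝ᵥ (((c ⬝ᵥ x) / (x ⬝ᵥ Q.mulVec x)) • Q.mulVec x - c)) ^ 2 /
        ((v ⬝ᵥ Q.mulVec v) - (v ⬝ᵥ Q.mulVec x) ^ 2 / (x ⬝ᵥ Q.mulVec x))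
      = (v ⬝ᵥ (Q.mulVec (((c ⬝ᵥ x) / (x ⬝ᵥ Q.mulVec x)) • x) - c)) ^ 2 /
          (v ⬝ᵥ Q.mulVec v) *
        (1 - (v ⬝ᵥ Q.mulVec x) ^ 2 /
          ((v ⬝ᵥ Q.mulVec v) * (x ⬝ᵥ Q.mulVec x)))⁻¹ ∧
    1 ≤ (1 - (v ⬝ᵥ Q.mulVec x) ^ 2 /
          ((v ⬝ᵥ Q.mulVec v) * (x ⬝ᵥ Q.mulVec x)))⁻¹ := by
  have hxQ : Q.mulVec x ≠ 0 := by
    intro h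
    exact (LinearIndependent.ne_zero 0 hnc) (by simpa using h)
  have hvQ : Q.mulVec v ≠ 0 := by
    intro h
    exact (LinearIndependent.ne_zero 1 hnc) (by simpa using h)
  have ha : 0 < x ⬝ᵥ Q.mulVec x := by
    rcases lt_or_eq_of_le (hQ.dotProduct_mulVec_nonneg x) with h | h
    · simpa using h
    · exact absurd (aux_zero hQ h.symm) hxQ
  have hb : 0 < v ⬝ᵥ Q.mulVec v := by
    rcases lt_or_eq_of_le (hQ.dotProduct_mulVec_nonneg v) with h | h
    · simpa using h
    · exact absurd (aux_zero hQ h.symm) hvQ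
  have hQt : Qᵀ = Q := by
    have := hQ.1
    simpa [Matrix.IsHermitian, Matrix.conjTranspose_eq_transpose_of_trivial] using this
  have hsym : ∀ u w : Fin N → ℝ, u ⬝ᵥ Q.mulVec w = w ⬝ᵥ Q.mulVec u := by
    intro u w
    rw [dotProduct_mulVec, ← mulVec_transpose, hQt, dotProduct_comm]
  have hcs : (v ⬝ᵥ Q.mulVec x) ^ 2 < (v ⬝ᵥ Q.mulVec v) * (x ⬝ᵥ Q.mulVec x) := by
    by_contra hle
    push_neg at hle
    have hq : (v - ((v ⬝ᵥ Q.mulVec x) / (x ⬝ᵥ Q.mulVec x)) • x) ⬝ᵥ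
        Q.mulVec (v - ((v ⬝ᵥ Q.mulVec x) / (x ⬝ᵥ Q.mulVec x)) • x)
        = (v ⬝ᵥ Q.mulVec v) - (v ⬝ᵥ Q.mulVec x) ^ 2 / (x ⬝ᵥ Q.mulVec x) := by
      simp only [sub_dotProduct, mulVec_sub, dotProduct_sub, mulVec_smul,
        smul_dotProduct, dotProduct_smul, smul_eq_mul]
      rw [hsym x v]
      field_simp
      ring
    have hqle : (v ⬝ᵥ Q.mulVec v) - (v ⬝ᵥ Q.mulVec x) ^ 2 / (x ⬝ᵥ Q.mulVec x) ≤ 0 := by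
      have : (v ⬝ᵥ Q.mulVec v) ≤ (v ⬝ᵥ Q.mulVec x) ^ 2 / (x ⬝ᵥ Q.mulVec x) := by
        rw [le_div_iff₀ ha]; linarith
      linarith
    have hnn := hQ.dotProduct_mulVec_nonneg (v - ((v ⬝ᵥ Q.mulVec x) / (x ⬝ᵥ Q.mulVec x)) • x)
    have hq0 : (v - ((v ⬝ᵥ Q.mulVec x) / (x ⬝ᵥ Q.mulVec x)) • x) ⬝ᵥ
        Q.mulVec (v - ((v ⬝ᵥ Q.mulVec x) / (x ⬝ᵥ Q.mulVec x)) • x) = 0 :=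
      le_antisymm (by simpa [hq] using hqle) (by simpa using hnn)
    have hz := aux_zero hQ hq0
    rw [mulVec_sub, mulVec_smul, sub_eq_zero] at hz
    rw [LinearIndependent.pair_iff' hxQ] at hnc
    exact hnc _ hz.symm
  constructor
  · rw [mulVec_smul]
    exact aux_alg _ _ _ _ ha hb hcs
  · have hab : (v ⬝ᵥ Q.mulVec x) ^ 2 / ((v ⬝ᵥ Q.mulVec v) * (x ⬝ᵥ Q.mulVec x)) < 1 :=
      (div_lt_one (by positivity)).mpr hcs
    have h0 : 0 ≤ (v ⬝ᵥ Q.mulVec x) ^ 2 / ((v ⬝ᵥ Q.mulVec v) * (x ⬝ᵥ Q.mulVec x)) := by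
      positivity
    rw [le_inv_comm₀ one_pos (by linarith)]
    simp only [inv_one]
    linarith
end

section
/- Suppose Q_{ii} > 0 for all i. For any x ∈ R^N, max over i ∈ [N] of [Qx - c]_i^2 / Q_{ii} ≥ ι_Q · D(x), where ι_Q = λ_min⁺(Q) / (N · max_i Q_{ii}) and λ_min⁺(Q) denotes the smallest nonzero eigenvalue of Q. -/
open Matrix

/-- Smallest nonzero eigenvalue of `Q`. -/
noncomputable def lamMinPos {N : ℕ} (Q : Matrix (Fin N) (Fin N) ℝ) : ℝ :=
  sInf {μ : ℝ | μ ∈ spectrum ℝ Q ∧ μ ≠ 0}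

/-- `ι_Q = λ_min⁺(Q) / (N · max_i Q_{ii})`. -/
noncomputable def iotaQ {N : ℕ} (Q : Matrix (Fin N) (Fin N) ℝ) : ℝ :=
  lamMinPos Q / (N * ⨆ i, Q i i)

theorem stmt18 {N : ℕ} [NeZero N] (Q : Matrix (Fin N) (Fin N) ℝ)
    (hQ : Q.PosSemidef) (hQ0 : Q ≠ 0) (hdiag : ∀ i, 0 < Q i i)
    (α : Fin N → ℝ) (c : Fin N → ℝ) (hc : c = Q.mulVec α)
    (x : Fin N → ℝ) :
    iotaQ Q * Dmap Q c α x
      ≤ ⨆ i, ((Q.mulVec x - c) i) ^ 2 / Q i i := by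
  classical
  have hH : Q.IsHermitian := hQ.1
  set t := lamMinPos Q with htdef
  set V : Matrix (Fin N) (Fin N) ℝ := (hH.eigenvectorUnitary : Matrix (Fin N) (Fin N) ℝ) with hV
  set lam : Fin N → ℝ := hH.eigenvalues with hlam
  have hVV : Vᴴ * V = 1 := by
    have := mem_unitaryGroup_iff'.mp (hH.eigenvectorUnitary).2
    simpa [Matrix.star_eq_conjTranspose] using this
  have hQeq : Q = V * diagonal lam * Vᴴ := by
    have := hH.spectral_theorem
    simpa [Matrix.star_eq_conjTranspose] using this
  -- nonzero spectrum facts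
  have hspec : spectrum ℝ Q = Set.range lam := hH.spectrum_real_eq_range_eigenvalues
  have hfin : ({μ : ℝ | μ ∈ spectrum ℝ Q ∧ μ ≠ 0}).Finite :=
    (Matrix.finite_real_spectrum (A := Q)).subset fun μ hμ => hμ.1
  have htle : ∀ i, lam i ≠ 0 → t ≤ lam i := by
    intro i hi
    exact csInf_le hfin.bddBelow ⟨by rw [hspec]; exact ⟨i, rfl⟩, hi⟩
  -- key PSD
  have hQ2nn : ∀ i, 0 ≤ lam i := hQ.eigenvalues_nonneg
  have hent : ∀ i, 0 ≤ lam i ^ 2 - t * lam i := by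
    intro i
    rcases eq_or_ne (lam i) 0 with h | h
    · simp [h]
    · have h1 := htle i h
      have h2 : 0 ≤ lam i := hQ2nn i
      nlinarith
  clear_value t
  clear_value V lam
  have key : PosSemidef (Q * Q - t • Q) := by
    have heq : Q * Q - t • Q
        = V * diagonal (fun i => lam i ^ 2 - t * lam i) * Vᴴ := by
      have hmul : (V * diagonal lam * Vᴴ) * (V * diagonal lam * Vᴴ)
          = V * (diagonal lam * diagonal lam) * Vᴴ := by
        calc (V * diagonal lam * Vᴴ) * (V * diagonal lam * Vᴴ)
            = V * (diagonal lam * ((Vᴴ * V) * (diagonal lam * Vᴴ))) := by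
              simp only [Matrix.mul_assoc]
          _ = V * (diagonal lam * diagonal lam) * Vᴴ := by
              rw [hVV, Matrix.one_mul, ← Matrix.mul_assoc, ← Matrix.mul_assoc,
                Matrix.mul_assoc V]
      have hsmul : V * (t • diagonal lam) * Vᴴ = t • (V * diagonal lam * Vᴴ) := by
        rw [Matrix.mul_smul, Matrix.smul_mul]
      rw [hQeq, hmul, diagonal_mul_diagonal, ← hsmul, ← Matrix.sub_mul, ← Matrix.mul_sub]
      congr 2
      ext i j
      rcases eq_or_ne i j with h | h
      · subst h
        simp [Matrix.diagonal_apply_eq, sq]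
      · simp [Matrix.diagonal_apply_ne _ h]
    rw [heq]
    exact (PosSemidef.diagonal (fun i => hent i)).mul_mul_conjTranspose_same V
  -- symmetry helper
  have htr : Qᵀ = Q := by
    have := hH.eq; rwa [conjTranspose_eq_transpose_of_trivial] at this
  have hsym : ∀ u v : Fin N → ℝ, u ⬝ᵥ Q.mulVec v = Q.mulVec u ⬝ᵥ v := by
    intro u v
    rw [Matrix.dotProduct_mulVec, ← Matrix.mulVec_transpose, htr]
  set y : Fin N → ℝ := x - α with hy
  set r : Fin N → ℝ := Q.mulVec y with hr
  have hrx : Q.mulVec x - c = r := by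
    rw [hc, hr, hy, Matrix.mulVec_sub]
  have hD : Dmap Q c α x = y ⬝ᵥ Q.mulVec y := by
    have h1 : c ⬝ᵥ x = α ⬝ᵥ Q.mulVec x := by
      rw [hc, dotProduct_comm, hsym]; exact dotProduct_comm _ _
    have h2 : c ⬝ᵥ α = α ⬝ᵥ Q.mulVec α := by
      rw [hc, dotProduct_comm, hsym]
    have h3 : x ⬝ᵥ Q.mulVec α = α ⬝ᵥ Q.mulVec x := by
      rw [hsym, dotProduct_comm]
    simp only [Dmap, hy, Matrix.mulVec_sub, dotProduct_sub, sub_dotProduct, h1, h2]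
    rw [h3]; ring
  -- quadratic form inequality
  have hQ2 : y ⬝ᵥ (Q * Q).mulVec y = ∑ i, r i ^ 2 := by
    rw [← Matrix.mulVec_mulVec, hsym, ← hr, dotProduct]
    exact Finset.sum_congr rfl fun i _ => (sq (r i)).symm
  have hkey : t * (y ⬝ᵥ Q.mulVec y) ≤ ∑ i, r i ^ 2 := by
    have := key.dotProduct_mulVec_nonneg y
    simp only [Matrix.sub_mulVec, Matrix.smul_mulVec, dotProduct_sub, dotProduct_smul,
      star_trivial, smul_eq_mul] at this
    rw [← hQ2]
    linarith
  -- sup work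
  set M : ℝ := ⨆ i, Q i i with hM
  set g : Fin N → ℝ := fun i => r i ^ 2 / Q i i with hg
  have hbddg : BddAbove (Set.range g) := Set.Finite.bddAbove (Set.finite_range g)
  have hbddQ : BddAbove (Set.range fun i => Q i i) := Set.Finite.bddAbove (Set.finite_range _)
  have i0 : Fin N := ⟨0, Nat.pos_of_neZero N⟩
  have hM0 : 0 < M := lt_of_lt_of_le (hdiag i0) (le_ciSup hbddQ i0)
  have hg0 : ∀ i, 0 ≤ g i := fun i => div_nonneg (sq_nonneg _) (hdiag i).le
  have hgsup0 : 0 ≤ ⨆ i, g i := le_trans (hg0 i0) (le_ciSup hbddg i0)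
  have hterm : ∀ i : Fin N, r i ^ 2 ≤ M * ⨆ j, g j := by
    intro i
    have h1 : r i ^ 2 = Q i i * g i := by
      show r i ^ 2 = Q i i * (r i ^ 2 / Q i i)
      rw [mul_comm]
      exact (div_mul_cancel₀ _ (hdiag i).ne').symm
    calc r i ^ 2 = Q i i * g i := h1
      _ ≤ M * g i := mul_le_mul_of_nonneg_right (le_ciSup hbddQ i) (hg0 i)
      _ ≤ M * ⨆ j, g j := mul_le_mul_of_nonneg_left (le_ciSup hbddg i) hM0.le
  have hsum : ∑ i, r i ^ 2 ≤ N * (M * ⨆ j, g j) := by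
    calc ∑ i, r i ^ 2 ≤ ∑ _i : Fin N, (M * ⨆ j, g j) :=
          Finset.sum_le_sum fun i _ => hterm i
      _ = N * (M * ⨆ j, g j) := by simp [Finset.sum_const, nsmul_eq_mul]
  -- combine
  have hNM : (0 : ℝ) < N * M := by
    have : (0 : ℝ) < N := by exact_mod_cast Nat.pos_of_neZero N
    positivity
  have hrw : (⨆ i, ((Q.mulVec x - c) i) ^ 2 / Q i i) = ⨆ i, g i := by
    exact iSup_congr fun i => by rw [hrx]
  rw [hrw, iotaQ, ← htdef, hD, ← hM]
  rw [div_mul_eq_mul_div, div_le_iff₀ hNM]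
  calc t * (y ⬝ᵥ Q.mulVec y) ≤ ∑ i, r i ^ 2 := hkey
    _ ≤ N * (M * ⨆ j, g j) := hsum
    _ = (⨆ i, g i) * (N * M) := by ring
end

section
/- Suppose Q_{ii} > 0 for all i. Let x⁰ ∈ R^N, and define the coordinate-descent iterates x^{k+1} = x^k + ρ^k e_{i_k}, where i_k maximises [Qx^k - c]_i^2 / Q_{ii} over i ∈ [N] and ρ^k = -[Qx^k - c]_{i_k} / Q_{i_k,i_k}. Then D(x^k) ≤ (1 - ι_Q)^k D(x⁰) for all k, where ι_Q = λ_min⁺(Q)/(N max_i Q_{ii}); in particular D(x^k) → 0. -/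
open Matrix

lemma lam_facts {N : ℕ} {Q : Matrix (Fin N) (Fin N) ℝ} (hQ : Q.PosSemidef) (hQ0 : Q ≠ 0) :
    (∃ i, lamMinPos Q = hQ.1.eigenvalues i ∧ hQ.1.eigenvalues i ≠ 0) ∧
    ∀ i, hQ.1.eigenvalues i ≠ 0 → lamMinPos Q ≤ hQ.1.eigenvalues i := by
  classical
  set ev := hQ.1.eigenvalues with hev
  set S : Set ℝ := {μ : ℝ | μ ∈ spectrum ℝ Q ∧ μ ≠ 0} with hS
  have hspec : spectrum ℝ Q = Set.range ev := hQ.1.spectrum_real_eq_range_eigenvalues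
  have hsub : S ⊆ Set.range ev := fun μ hμ => hspec ▸ hμ.1
  have hfin : S.Finite := (Set.finite_range ev).subset hsub
  have hev0 : ev ≠ 0 := by
    intro h
    apply hQ0
    have h2 := hQ.1.spectral_theorem
    rw [hev] at h
    rw [h] at h2
    have hd : Matrix.diagonal (RCLike.ofReal ∘ (0 : Fin N → ℝ)) = (0 : Matrix (Fin N) (Fin N) ℝ) := by
      ext i j; simp [Matrix.diagonal]
    rw [hd] at h2
    simpa using h2
  obtain ⟨i, hi⟩ := Function.ne_iff.mp hev0
  have hne : S.Nonempty := ⟨ev i, hspec ▸ Set.mem_range_self i, hi⟩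
  have hmem : sInf S ∈ S := hne.csInf_mem hfin
  have hbdd : BddBelow S := hfin.bddBelow
  constructor
  · obtain ⟨j, hj⟩ := hsub hmem
    exact ⟨j, hj.symm, hj ▸ hmem.2⟩
  · intro j hj
    exact csInf_le hbdd ⟨hspec ▸ Set.mem_range_self j, hj⟩

lemma qsym {N : ℕ} {Q : Matrix (Fin N) (Fin N) ℝ} (hQ : Q.IsHermitian)
    (v w : Fin N → ℝ) : v ⬝ᵥ Q.mulVec w = (Q.mulVec v) ⬝ᵥ w := by
  have hsym : Qᵀ = Q := by
    rwa [IsHermitian, conjTranspose_eq_transpose_of_trivial] at hQ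
  rw [Matrix.dotProduct_mulVec, ← Matrix.mulVec_transpose, hsym]

lemma inner_eq_dot {N : ℕ} (v w : EuclideanSpace ℝ (Fin N)) :
    (inner ℝ v w : ℝ) = (⇑v : Fin N → ℝ) ⬝ᵥ (⇑w : Fin N → ℝ) := by
  simp [PiLp.inner_apply, dotProduct, RCLike.inner_apply, mul_comm]

lemma spec_key {N : ℕ} {Q : Matrix (Fin N) (Fin N) ℝ} (hQ : Q.PosSemidef) (hQ0 : Q ≠ 0)
    (y : Fin N → ℝ) :
    lamMinPos Q * (y ⬝ᵥ Q.mulVec y) ≤ (Q.mulVec y) ⬝ᵥ (Q.mulVec y) := by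
  classical
  set B := hQ.1.eigenvectorBasis with hB
  set ev := hQ.1.eigenvalues with hev
  set v : EuclideanSpace ℝ (Fin N) := (WithLp.equiv 2 (Fin N → ℝ)).symm y with hv
  have hvy : (⇑v : Fin N → ℝ) = y := rfl
  set w : EuclideanSpace ℝ (Fin N) := (WithLp.equiv 2 (Fin N → ℝ)).symm (Q.mulVec y) with hw
  have hwy : (⇑w : Fin N → ℝ) = Q.mulVec y := rfl
  set a : Fin N → ℝ := fun i => (⇑(B i) : Fin N → ℝ) ⬝ᵥ y with ha
  have key : ∀ i, (inner ℝ (B i) w : ℝ) = ev i * a i := by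
    intro i
    rw [inner_eq_dot, hwy, qsym hQ.1, hB, hQ.1.mulVec_eigenvectorBasis, smul_dotProduct]
    rfl
  have key2 : ∀ i, (inner ℝ v (B i) : ℝ) = a i := by
    intro i
    rw [inner_eq_dot, hvy, dotProduct_comm]
  have c1 : y ⬝ᵥ Q.mulVec y = ∑ i, a i * (ev i * a i) := by
    rw [← hwy, ← hvy, ← inner_eq_dot, ← B.sum_inner_mul_inner v w]
    exact Finset.sum_congr rfl fun i _ => by rw [key, key2]
  have c2 : (Q.mulVec y) ⬝ᵥ (Q.mulVec y) = ∑ i, (ev i * a i) * (ev i * a i) := by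
    rw [← hwy, ← inner_eq_dot, ← B.sum_inner_mul_inner w w]
    refine Finset.sum_congr rfl fun i _ => ?_
    rw [key, real_inner_comm, key]
  rw [c1, c2, Finset.mul_sum]
  refine Finset.sum_le_sum fun i _ => ?_
  rcases eq_or_ne (ev i) 0 with h | h
  · simp [h]
  · have h1 := (lam_facts hQ hQ0).2 i h
    rw [← hev] at h1
    have h2 : 0 ≤ ev i := hQ.eigenvalues_nonneg i
    have h3 : 0 ≤ ev i * (a i * a i) := mul_nonneg h2 (mul_self_nonneg (a i))
    nlinarith [mul_nonneg (sub_nonneg.2 h1) h3]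

lemma trace_fact {N : ℕ} {Q : Matrix (Fin N) (Fin N) ℝ} (hQ : Q.PosSemidef) :
    ∑ i, hQ.1.eigenvalues i = ∑ i, Q i i := by
  classical
  have h := congrArg Matrix.trace hQ.1.spectral_theorem
  rw [Unitary.conjStarAlgAut_apply, Matrix.trace_mul_comm, ← Matrix.mul_assoc] at h
  rw [show (star (hQ.1.eigenvectorUnitary : Matrix (Fin N) (Fin N) ℝ)) *
      (hQ.1.eigenvectorUnitary : Matrix (Fin N) (Fin N) ℝ) = 1 from
    congrArg Subtype.val (Unitary.star_mul_self hQ.1.eigenvectorUnitary)] at h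
  rw [Matrix.one_mul, Matrix.trace_diagonal] at h
  simpa [Matrix.trace, Matrix.diag] using h.symm

lemma dmap_eq {N : ℕ} (Q : Matrix (Fin N) (Fin N) ℝ) (hQ : Q.PosSemidef) (α z : Fin N → ℝ) :
    Dmap Q (Q.mulVec α) α z = (z - α) ⬝ᵥ Q.mulVec (z - α) := by
  have e1 : Q.mulVec α ⬝ᵥ z = Q.mulVec z ⬝ᵥ α := by
    rw [dotProduct_comm, qsym hQ.1]
  have e2 : (Q.mulVec α) ⬝ᵥ α = α ⬝ᵥ Q.mulVec α := dotProduct_comm _ _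
  unfold Dmap
  rw [mulVec_sub, dotProduct_sub, sub_dotProduct, sub_dotProduct, qsym hQ.1 z α, e1, e2,
    qsym hQ.1 α z, e1]
  ring

lemma dot_expand {N : ℕ} (Q : Matrix (Fin N) (Fin N) ℝ) (hQ : Q.PosSemidef) (y : Fin N → ℝ)
    (t : ℝ) (i : Fin N) :
    (y + t • (Pi.single i 1 : Fin N → ℝ)) ⬝ᵥ Q.mulVec (y + t • (Pi.single i 1 : Fin N → ℝ))
      = y ⬝ᵥ Q.mulVec y + 2 * t * (Q.mulVec y i) + t ^ 2 * Q i i := by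
  have h1 : (Pi.single i 1 : Fin N → ℝ) ⬝ᵥ Q.mulVec y = Q.mulVec y i := by
    rw [single_dotProduct, one_mul]
  have h2 : (Pi.single i 1 : Fin N → ℝ) ⬝ᵥ Q.mulVec (Pi.single i 1) = Q i i := by
    rw [single_dotProduct, one_mul, mulVec_single]; simp
  have h3 : y ⬝ᵥ Q.mulVec (Pi.single i 1 : Fin N → ℝ) = Q.mulVec y i := by
    rw [qsym hQ.1, dotProduct_comm, h1]
  rw [mulVec_add, dotProduct_add, add_dotProduct, add_dotProduct, mulVec_smul,
    dotProduct_smul, dotProduct_smul, smul_dotProduct, smul_dotProduct,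
    h3, h1, h2]
  simp only [smul_eq_mul]
  ring

theorem stmt19 {N : ℕ} [NeZero N] (Q : Matrix (Fin N) (Fin N) ℝ)
    (hQ : Q.PosSemidef) (hQ0 : Q ≠ 0) (hdiag : ∀ i, 0 < Q i i)
    (α : Fin N → ℝ) (c : Fin N → ℝ) (hc : c = Q.mulVec α)
    (x : ℕ → Fin N → ℝ) (idx : ℕ → Fin N)
    (hsel : ∀ k, ∀ j : Fin N,
      ((Q.mulVec (x k) - c) j) ^ 2 / Q j j
        ≤ ((Q.mulVec (x k) - c) (idx k)) ^ 2 / Q (idx k) (idx k))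
    (hstep : ∀ k, x (k + 1)
      = x k + (-((Q.mulVec (x k) - c) (idx k)) / Q (idx k) (idx k)) •
          (Pi.single (idx k) (1 : ℝ) : Fin N → ℝ)) :
    (∀ k : ℕ, Dmap Q c α (x k) ≤ (1 - iotaQ Q) ^ k * Dmap Q c α (x 0)) ∧
    Filter.Tendsto (fun k => Dmap Q c α (x k)) Filter.atTop (nhds 0) := by
  classical
  subst hc
  set D : (Fin N → ℝ) → ℝ := fun z => Dmap Q (Q.mulVec α) α z with hD
  set g : ℕ → Fin N → ℝ := fun k => Q.mulVec (x k) - Q.mulVec α with hg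
  have hgrad : ∀ k, g k = Q.mulVec (x k - α) := by
    intro k; rw [hg, mulVec_sub]
  have hDval : ∀ z, D z = (z - α) ⬝ᵥ Q.mulVec (z - α) := fun z => dmap_eq Q hQ α z
  have hDnonneg : ∀ z, 0 ≤ D z := by
    intro z
    rw [hDval]
    have := hQ.dotProduct_mulVec_nonneg (z - α)
    simpa using this
  -- basic positivity facts
  set s : ℝ := ⨆ i, Q i i with hs
  have hbddA : BddAbove (Set.range fun i => Q i i) := (Set.finite_range _).bddAbove
  have hQle : ∀ j : Fin N, Q j j ≤ s := fun j => le_ciSup hbddA j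
  have i0 : Fin N := ⟨0, Nat.pos_of_ne_zero (NeZero.ne N)⟩
  have hspos : 0 < s := lt_of_lt_of_le (hdiag i0) (hQle i0)
  have hNpos : (0 : ℝ) < N := by
    exact_mod_cast Nat.pos_of_ne_zero (NeZero.ne N)
  have hNs : (0 : ℝ) < N * s := mul_pos hNpos hspos
  have hlam_pos : 0 < lamMinPos Q := by
    obtain ⟨i, heq, hne⟩ := (lam_facts hQ hQ0).1
    rw [heq]
    exact lt_of_le_of_ne (hQ.eigenvalues_nonneg i) (Ne.symm hne)
  have hlam_le_Ns : lamMinPos Q ≤ N * s := by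
    obtain ⟨i, heq, hne⟩ := (lam_facts hQ hQ0).1
    calc lamMinPos Q = hQ.1.eigenvalues i := heq
      _ ≤ ∑ j, hQ.1.eigenvalues j :=
          Finset.single_le_sum (fun j _ => hQ.eigenvalues_nonneg j) (Finset.mem_univ i)
      _ = ∑ j, Q j j := trace_fact hQ
      _ ≤ ∑ _j : Fin N, s := Finset.sum_le_sum fun j _ => hQle j
      _ = N * s := by simp [Finset.sum_const, nsmul_eq_mul]
  have hiota_pos : 0 < iotaQ Q := div_pos hlam_pos hNs
  have hiota_le : iotaQ Q ≤ 1 := (div_le_one hNs).mpr hlam_le_Ns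
  -- one-step decrease
  have hstep2 : ∀ k, D (x (k + 1)) = D (x k) - (g k (idx k)) ^ 2 / Q (idx k) (idx k) := by
    intro k
    have hx : x (k + 1) - α = (x k - α)
        + (-(g k (idx k)) / Q (idx k) (idx k)) • (Pi.single (idx k) 1 : Fin N → ℝ) := by
      rw [hstep k]
      simp only [hg]
      abel
    have hgi : (Q.mulVec (x k - α)) (idx k) = g k (idx k) := by rw [← hgrad]
    rw [hDval, hDval, hx, dot_expand Q hQ (x k - α) (-(g k (idx k)) / Q (idx k) (idx k)) (idx k),
      hgi]
    have hQii : Q (idx k) (idx k) ≠ 0 := (hdiag (idx k)).ne'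
    field_simp
    ring
  -- per-step contraction
  have hM : ∀ k, iotaQ Q * D (x k) ≤ (g k (idx k)) ^ 2 / Q (idx k) (idx k) := by
    intro k
    set M : ℝ := (g k (idx k)) ^ 2 / Q (idx k) (idx k) with hMdef
    have h1 : lamMinPos Q * D (x k) ≤ (Q.mulVec (x k - α)) ⬝ᵥ (Q.mulVec (x k - α)) := by
      rw [hDval]
      exact spec_key hQ hQ0 _
    have h2 : (Q.mulVec (x k - α)) ⬝ᵥ (Q.mulVec (x k - α)) = ∑ j, (g k j) ^ 2 := by
      rw [← hgrad]
      simp [dotProduct, pow_two]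
    have h3 : ∀ j, (g k j) ^ 2 ≤ M * Q j j := by
      intro j
      have hsel' := hsel k j
      have hQjj : (0 : ℝ) < Q j j := hdiag j
      calc (g k j) ^ 2 = ((g k j) ^ 2 / Q j j) * Q j j := by field_simp
        _ ≤ M * Q j j := mul_le_mul_of_nonneg_right hsel' hQjj.le
    have hM0 : 0 ≤ M := div_nonneg (sq_nonneg _) (hdiag _).le
    have h4 : ∑ j, (g k j) ^ 2 ≤ (N : ℝ) * s * M := by
      calc ∑ j, (g k j) ^ 2 ≤ ∑ j, M * Q j j := Finset.sum_le_sum fun j _ => h3 j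
        _ ≤ ∑ _j : Fin N, M * s := Finset.sum_le_sum fun j _ =>
            mul_le_mul_of_nonneg_left (hQle j) hM0
        _ = (N : ℝ) * (M * s) := by simp [Finset.sum_const, nsmul_eq_mul]
        _ = (N : ℝ) * s * M := by ring
    have h5 : lamMinPos Q * D (x k) ≤ (N : ℝ) * s * M := le_trans h1 (h2 ▸ h4)
    rw [iotaQ]
    rw [div_mul_eq_mul_div, div_le_iff₀ hNs]
    calc lamMinPos Q * D (x k) ≤ (N : ℝ) * s * M := h5
      _ = M * ((N : ℝ) * s) := by ring
  have hdec : ∀ k, D (x (k + 1)) ≤ (1 - iotaQ Q) * D (x k) := by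
    intro k
    have h := hM k
    rw [hstep2 k]
    nlinarith [h]
  have hone : 0 ≤ 1 - iotaQ Q := by linarith
  have hbound : ∀ k, D (x k) ≤ (1 - iotaQ Q) ^ k * D (x 0) := by
    intro k
    induction k with
    | zero => simp
    | succ n ih =>
      calc D (x (n + 1)) ≤ (1 - iotaQ Q) * D (x n) := hdec n
        _ ≤ (1 - iotaQ Q) * ((1 - iotaQ Q) ^ n * D (x 0)) :=
            mul_le_mul_of_nonneg_left ih hone
        _ = (1 - iotaQ Q) ^ (n + 1) * D (x 0) := by ring
  refine ⟨hbound, ?_⟩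
  have hlt : 1 - iotaQ Q < 1 := by linarith
  have hlim : Filter.Tendsto (fun k : ℕ => (1 - iotaQ Q) ^ k * D (x 0))
      Filter.atTop (nhds 0) := by
    have := (tendsto_pow_atTop_nhds_zero_of_lt_one hone hlt).mul_const (D (x 0))
    simpa using this
  exact tendsto_of_tendsto_of_tendsto_of_le_of_le tendsto_const_nhds hlim
    (fun k => hDnonneg (x k)) hbound
end
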